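/- arXiv:1508.05510 — 3 statements merged into one kernel-verified Lean document; each statement's English description precedes it below -/
import Mathlib

section
/- Let f : B_1 → ℝ be Lipschitz on the unit disk in ℝ² and let 0 < γ₀ < 1. Then ∫_{B_1} |z|^{γ₀−1} |f(z)|² dz ≤ C ∫_{B_1} |Df|² + C ∫_{∂B_1} |f|², where C depends only on γ₀. -/
open MeasureTheory Real Set Filter Topology ENNReal

theorem lintegral_polar_aux (g : ℝ × ℝ → ℝ≥0∞) :
    (∫⁻ p in polarCoord.target, ENNReal.ofReal p.1 * g (polarCoord.symm p)) = ∫⁻ p, g p := by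
  set B : ℝ × ℝ → ℝ × ℝ →L[ℝ] ℝ × ℝ := fun p =>
    LinearMap.toContinuousLinearMap (Matrix.toLin (Module.Basis.finTwoProd ℝ) (Module.Basis.finTwoProd ℝ)
      !![Real.cos p.2, -p.1 * Real.sin p.2; Real.sin p.2, p.1 * Real.cos p.2])
  have B_det : ∀ p, (B p).det = p.1 := by
    intro p
    conv_rhs => rw [← one_mul p.1, ← cos_sq_add_sin_sq p.2]
    simp only [B, neg_mul, LinearMap.det_toContinuousLinearMap, LinearMap.det_toLin,
      Matrix.det_fin_two_of, sub_neg_eq_add]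
    ring
  symm
  calc
    ∫⁻ p, g p = ∫⁻ p in polarCoord.source, g p := by
      rw [← setLIntegral_univ]
      exact (setLIntegral_congr polarCoord_source_ae_eq_univ.symm)
    _ = ∫⁻ p in polarCoord.symm '' polarCoord.target, g p := by
      rw [polarCoord.symm_image_target_eq_source]
    _ = ∫⁻ p in polarCoord.target, ENNReal.ofReal |(B p).det| * g (polarCoord.symm p) := by
      refine lintegral_image_eq_lintegral_abs_det_fderiv_mul volume
        polarCoord.open_target.measurableSet
        (fun p _ => (hasFDerivAt_polarCoord_symm p).hasFDerivWithinAt) ?_ g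
      exact polarCoord.symm.injOn
    _ = ∫⁻ p in polarCoord.target, ENNReal.ofReal p.1 * g (polarCoord.symm p) := by
      refine setLIntegral_congr_fun polarCoord.open_target.measurableSet
        (fun p hp => ?_)
      rw [B_det, abs_of_pos hp.1]

theorem lintegral_polar_complex (g : ℂ → ℝ≥0∞) (hg : Measurable g) :
    (∫⁻ p in polarCoord.target, ENNReal.ofReal p.1 * g (Complex.polarCoord.symm p)) =
      ∫⁻ z, g z := by
  rw [← (Complex.volume_preserving_equiv_real_prod.symm).lintegral_comp hg,
    ← lintegral_polar_aux]
  rfl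

theorem lintegral_ball_polar (g : ℂ → ℝ≥0∞) (hg : Measurable g) :
    ∫⁻ z in Metric.ball (0 : ℂ) 1, g z
      = ∫⁻ p in Ioo (0:ℝ) 1 ×ˢ Ioo (-π) π,
          ENNReal.ofReal p.1 * g (Complex.polarCoord.symm p) := by
  have hT' : MeasurableSet (Ioo (0:ℝ) 1 ×ˢ Ioo (-π) π) :=
    (measurableSet_Ioo).prod measurableSet_Ioo
  have hsub : Ioo (0:ℝ) 1 ×ˢ Ioo (-π) π ⊆ polarCoord.target := by
    rintro ⟨r, θ⟩ ⟨hr, hθ⟩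
    exact ⟨hr.1, hθ⟩
  have key := lintegral_polar_complex ((Metric.ball (0 : ℂ) 1).indicator g)
    (hg.indicator measurableSet_ball)
  rw [lintegral_indicator measurableSet_ball] at key
  rw [← key]
  have : ∀ p ∈ polarCoord.target,
      ENNReal.ofReal p.1 * (Metric.ball (0 : ℂ) 1).indicator g (Complex.polarCoord.symm p)
        = (Ioo (0:ℝ) 1 ×ˢ Ioo (-π) π).indicator
            (fun q => ENNReal.ofReal q.1 * g (Complex.polarCoord.symm q)) p := by
    rintro ⟨r, θ⟩ ⟨hr, hθ⟩
    simp only [mem_Ioi] at hr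
    have habs : ‖Complex.polarCoord.symm (r, θ)‖ = r := by
      rw [Complex.norm_polarCoord_symm]; exact abs_of_pos hr
    have hmem : Complex.polarCoord.symm (r, θ) ∈ Metric.ball (0 : ℂ) 1 ↔ r < 1 := by
      rw [Metric.mem_ball, dist_zero_right, habs]
    by_cases h1 : r < 1
    · rw [Set.indicator_of_mem (hmem.2 h1), Set.indicator_of_mem (by exact ⟨⟨hr, h1⟩, hθ⟩)]
    · rw [Set.indicator_of_notMem (fun hh => h1 (hmem.1 hh)),
        Set.indicator_of_notMem (fun hh => h1 hh.1.2), mul_zero]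
  rw [setLIntegral_congr_fun polarCoord.open_target.measurableSet
      this,
    lintegral_indicator hT', Measure.restrict_restrict hT',
    inter_eq_self_of_subset_left hsub]

theorem tendsto_slope_seq {F : ℝ → ℝ} {c d : ℝ} (hF : HasDerivAt F d c) :
    Tendsto (fun n : ℕ => (F (c + 1/(n+1:ℝ)) - F c) / (1/(n+1:ℝ))) atTop (𝓝 d) := by
  have h1 : Tendsto (fun n : ℕ => c + 1/(n+1:ℝ)) atTop (𝓝[≠] c) := by
    apply tendsto_nhdsWithin_of_tendsto_nhds_of_eventually_within
    · have := tendsto_one_div_add_atTop_nhds_zero_nat (𝕜 := ℝ)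
      simpa using tendsto_const_nhds.add this
    · refine Eventually.of_forall fun n => ?_
      have : (0:ℝ) < 1/(n+1:ℝ) := by positivity
      simp only [mem_compl_iff, mem_singleton_iff]
      exact (lt_add_of_pos_right c this).ne'
  have h2 := (hasDerivAt_iff_tendsto_slope.1 hF).comp h1
  refine h2.congr fun n => ?_
  show slope F c (c + 1/(n+1:ℝ)) = _
  rw [slope_def_field, add_sub_cancel_left]

theorem lipschitz_integral_deriv {g : ℝ → ℝ} {L : NNReal} (hg : LipschitzWith L g)
    {a b : ℝ} (hab : a ≤ b) :
    g b - g a = ∫ t in a..b, deriv g t := by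
  set h : ℕ → ℝ := fun n => 1/(n+1:ℝ) with hh
  have hpos : ∀ n, (0:ℝ) < h n := fun n => by positivity
  have gInt : ∀ c d : ℝ, IntervalIntegrable g volume c d := fun c d =>
    hg.continuous.intervalIntegrable c d
  -- slope limits at a and b
  have slopeLim : ∀ c : ℝ, Tendsto (fun n => (∫ u in c..(c + h n), g u) / h n) atTop (𝓝 (g c)) := by
    intro c
    have hd : HasDerivAt (fun x => ∫ u in c..x, g u) (g c) c :=
      intervalIntegral.integral_hasDerivAt_right (gInt c c)
        (hg.continuous.stronglyMeasurable.stronglyMeasurableAtFilter)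
        hg.continuous.continuousAt
    have h3 := tendsto_slope_seq hd
    simp only [intervalIntegral.integral_same, sub_zero] at h3
    exact h3
  -- expression of difference quotient integrals
  have key1 : ∀ n, (∫ t in a..b, (g (t + h n) - g t) / h n)
      = (∫ u in b..(b + h n), g u) / h n - (∫ u in a..(a + h n), g u) / h n := by
    intro n
    have i1 : IntervalIntegrable (fun t => g (t + h n)) volume a b :=
      (hg.continuous.comp (continuous_id.add continuous_const)).intervalIntegrable a b
    have e1 : ∫ t in a..b, g (t + h n) = ∫ u in (a + h n)..(b + h n), g u :=
      intervalIntegral.integral_comp_add_right g (h n)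
    have c1 : (∫ u in a..(a + h n), g u) + ∫ u in (a + h n)..(b + h n), g u
        = ∫ u in a..(b + h n), g u :=
      intervalIntegral.integral_add_adjacent_intervals (gInt a (a + h n)) (gInt (a + h n) (b + h n))
    have c2 : (∫ u in a..b, g u) + ∫ u in b..(b + h n), g u = ∫ u in a..(b + h n), g u :=
      intervalIntegral.integral_add_adjacent_intervals (gInt a b) (gInt b (b + h n))
    have e2 : ∫ t in a..b, (g (t + h n) - g t) / h n
        = ((∫ t in a..b, g (t + h n)) - ∫ t in a..b, g t) / h n := by
      rw [← intervalIntegral.integral_sub i1 (gInt a b), intervalIntegral.integral_div]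
    rw [e2, e1, div_sub_div_same]
    congr 1
    linarith
  -- limit of difference quotient integrals is g b - g a
  have key2 : Tendsto (fun n => ∫ t in a..b, (g (t + h n) - g t) / h n) atTop
      (𝓝 (g b - g a)) := by
    have := (slopeLim b).sub (slopeLim a)
    refine this.congr fun n => (key1 n).symm
  -- limit is also the integral of deriv g, by dominated convergence
  have key3 : Tendsto (fun n => ∫ t in a..b, (g (t + h n) - g t) / h n) atTop
      (𝓝 (∫ t in a..b, deriv g t)) := by
    simp only [intervalIntegral.integral_of_le hab]
    apply MeasureTheory.tendsto_integral_of_dominated_convergence (bound := fun _ => (L:ℝ))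
    · intro n
      exact ((hg.continuous.comp (continuous_id.add continuous_const)).sub
        hg.continuous).div_const _ |>.aestronglyMeasurable
    · rw [integrable_const_iff]
      right
      infer_instance
    · intro n
      refine Eventually.of_forall fun t => ?_
      have hb : |g (t + h n) - g t| ≤ (L:ℝ) * h n := by
        have := hg.dist_le_mul (t + h n) t
        rw [Real.dist_eq, Real.dist_eq] at this
        simpa [abs_of_pos (hpos n)] using this
      rw [Real.norm_eq_abs, abs_div, abs_of_pos (hpos n), div_le_iff₀ (hpos n)]
      linarith
    · have hae : ∀ᵐ t ∂(volume.restrict (Ioc a b)), DifferentiableAt ℝ g t :=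
        ae_restrict_of_ae hg.ae_differentiableAt
      filter_upwards [hae] with t ht
      have := tendsto_slope_seq ht.hasDerivAt
      exact this
  exact tendsto_nhds_unique key2 key3

theorem polar_symm_exp (r θ : ℝ) :
    Complex.polarCoord.symm (r, θ) = (r:ℂ) * Complex.exp (θ * Complex.I) := by
  rw [Complex.polarCoord_symm_apply, Complex.exp_mul_I]
  simp [Complex.ofReal_cos, Complex.ofReal_sin]

theorem lintegral_ball_polar_iter (g : ℂ → ℝ≥0∞) (hg : Measurable g) :
    ∫⁻ z in Metric.ball (0 : ℂ) 1, g z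
      = ∫⁻ θ in Ioo (-π) π, ∫⁻ r in Ioo (0:ℝ) 1,
          ENNReal.ofReal r * g ((r:ℂ) * Complex.exp (θ * Complex.I)) := by
  rw [lintegral_ball_polar g hg]
  have hmp : Measurable (Complex.polarCoord.symm : ℝ × ℝ → ℂ) := by
    have : (Complex.polarCoord.symm : ℝ × ℝ → ℂ)
        = fun p : ℝ × ℝ => (p.1 : ℂ) * Complex.exp (p.2 * Complex.I) := by
      ext p; exact polar_symm_exp p.1 p.2
    rw [this]; fun_prop
  have hrestr : (volume : Measure (ℝ × ℝ)).restrict (Ioo (0:ℝ) 1 ×ˢ Ioo (-π) π)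
      = (volume.restrict (Ioo (0:ℝ) 1)).prod (volume.restrict (Ioo (-π) π)) := by
    rw [Measure.volume_eq_prod, Measure.prod_restrict]
  rw [hrestr, lintegral_prod_symm _ (by
    exact (measurable_fst.ennreal_ofReal.mul (hg.comp hmp)).aemeasurable)]
  refine lintegral_congr fun θ => lintegral_congr fun r => ?_
  rw [polar_symm_exp]

theorem core_ray (γ₀ : ℝ) (hγ₀ : 0 < γ₀) (hγ₁ : γ₀ < 1) {f : ℂ → ℝ} {K : NNReal}
    (hf : LipschitzWith K f) {z : ℂ} (hz : ‖z‖ = 1)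
    (hzd : ∀ᵐ (t : ℝ) ∂(volume.restrict (Ioo (0:ℝ) 1)), DifferentiableAt ℝ f ((t:ℂ) * z)) :
    ∫⁻ r in Ioo (0:ℝ) 1, ENNReal.ofReal (r ^ γ₀ * f ((r:ℂ) * z) ^ 2)
      ≤ 2 * ENNReal.ofReal (f z ^ 2)
        + 2 * ∫⁻ t in Ioo (0:ℝ) 1, ENNReal.ofReal (t * ‖fderiv ℝ f ((t:ℂ) * z)‖ ^ 2) := by
  set w : ℝ → ℝ := fun t => ‖fderiv ℝ f ((t:ℂ) * z)‖ with hwdef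
  have hzmeas : Measurable (fun t : ℝ => (t:ℂ) * z) := by fun_prop
  have hwmeas : Measurable w := ((measurable_fderiv ℝ f).comp hzmeas).norm
  have hwnn : ∀ t, 0 ≤ w t := fun t => norm_nonneg _
  have hwK : ∀ t, w t ≤ K := fun t => norm_fderiv_le_of_lipschitz ℝ hf
  set g : ℝ → ℝ := fun s => f ((s:ℂ) * z) with hgdef
  have hray : LipschitzWith 1 (fun s : ℝ => (s:ℂ) * z) := by
    apply LipschitzWith.of_dist_le_mul
    intro s s'
    rw [Complex.dist_eq]
    have e : (s:ℂ) * z - (s':ℂ) * z = ((s - s' : ℝ):ℂ) * z := by push_cast; ring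
    rw [e, norm_mul, Complex.norm_real, hz, Real.dist_eq]
    simp
  have hgL : LipschitzWith K g := by have := hf.comp hray; rwa [mul_one] at this
  have hg' : ∀ᵐ t ∂(volume.restrict (Ioo (0:ℝ) 1)), |deriv g t| ≤ w t := by
    filter_upwards [hzd] with t ht
    have hD : HasDerivAt g (fderiv ℝ f ((t:ℂ) * z) z) t := by
      refine ht.hasFDerivAt.comp_hasDerivAt t ?_
      simpa [Complex.real_smul] using (hasDerivAt_id t).smul_const z
    rw [hD.deriv]
    calc |(fderiv ℝ f ((t:ℂ)*z)) z| = ‖(fderiv ℝ f ((t:ℂ)*z)) z‖ := (Real.norm_eq_abs _).symm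
    _ ≤ ‖fderiv ℝ f ((t:ℂ)*z)‖ * ‖z‖ := ContinuousLinearMap.le_opNorm _ _
    _ = w t := by rw [hz, mul_one]
  set V : ℝ → ℝ≥0∞ := fun r => ∫⁻ t in Ioo r 1, ENNReal.ofReal (w t ^ 2) with hVdef
  -- pointwise (in r) estimate
  have pointwise : ∀ r ∈ Ioo (0:ℝ) 1,
      ENNReal.ofReal (f ((r:ℂ) * z) ^ 2)
        ≤ 2 * ENNReal.ofReal (f z ^ 2) + 2 * V r := by
    intro r hr
    have hsub : Ioo r 1 ⊆ Ioo (0:ℝ) 1 := fun x hx => ⟨lt_trans hr.1 hx.1, hx.2⟩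
    have haew : ∀ᵐ t ∂(volume.restrict (Ioo r 1)), |deriv g t| ≤ w t :=
      ae_restrict_of_ae_restrict_of_subset hsub hg'
    have hw_r : IntegrableOn w (Ioo r 1) volume := by
      refine Integrable.mono' (integrable_const (K:ℝ)) hwmeas.aestronglyMeasurable.restrict ?_
      exact Eventually.of_forall fun t => by
        rw [Real.norm_eq_abs, abs_of_nonneg (hwnn t)]; exact hwK t
    have hd_r : IntegrableOn (deriv g) (Ioo r 1) volume := by
      refine Integrable.mono' hw_r (measurable_deriv g).aestronglyMeasurable.restrict ?_
      simpa [Real.norm_eq_abs] using haew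
    have hFTC : g 1 - g r = ∫ t in Ioo r 1, deriv g t := by
      rw [← MeasureTheory.integral_Ioc_eq_integral_Ioo,
        ← intervalIntegral.integral_of_le hr.2.le]
      exact lipschitz_integral_deriv hgL hr.2.le
    set dr : ℝ := ∫ t in Ioo r 1, w t with hdrdef
    have hdrnn : (0:ℝ) ≤ dr := setIntegral_nonneg measurableSet_Ioo fun t _ => hwnn t
    have habs : |g 1 - g r| ≤ dr := by
      rw [hFTC]
      calc |∫ t in Ioo r 1, deriv g t| ≤ ∫ t in Ioo r 1, |deriv g t| := by
            simpa [Real.norm_eq_abs] using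
              MeasureTheory.norm_integral_le_integral_norm (μ := volume.restrict (Ioo r 1))
                (fun t => deriv g t)
      _ ≤ dr := integral_mono_ae hd_r.abs hw_r haew
    have hsq : f ((r:ℂ) * z) ^ 2 ≤ 2 * f z ^ 2 + 2 * dr ^ 2 := by
      have h3 : (g 1 - g r) ^ 2 ≤ dr ^ 2 := by
        nlinarith [sq_abs (g 1 - g r), habs, abs_nonneg (g 1 - g r)]
      have h1 : f z = g 1 := by simp [hgdef]
      rw [show f ((r:ℂ) * z) = g r from rfl, h1]
      nlinarith [h3, sq_nonneg (2 * g 1 - g r)]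
    -- Cauchy–Schwarz in ℝ≥0∞
    have hCS : ENNReal.ofReal (dr ^ 2) ≤ V r := by
      have e1 : ENNReal.ofReal dr = ∫⁻ t in Ioo r 1, ENNReal.ofReal (w t) :=
        MeasureTheory.ofReal_integral_eq_lintegral_ofReal hw_r
          (Eventually.of_forall fun t => hwnn t)
      have hconj : Real.HolderConjugate 2 2 := Real.HolderConjugate.two_two
      have hH := ENNReal.lintegral_mul_le_Lp_mul_Lq (volume.restrict (Ioo r 1)) hconj
        (hwmeas.ennreal_ofReal.aemeasurable)
        (aemeasurable_const (b := (1:ℝ≥0∞)))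
      simp only [Pi.mul_apply, mul_one, ENNReal.one_rpow] at hH
      have eA : ∀ t : ℝ, (ENNReal.ofReal (w t)) ^ (2:ℝ) = ENNReal.ofReal (w t ^ 2) := by
        intro t
        rw [show ((2:ℝ)) = ((2:ℕ):ℝ) by norm_num, ENNReal.rpow_natCast,
          ← ENNReal.ofReal_pow (hwnn t)]
      have hμ : (∫⁻ _ in Ioo r 1, (1:ℝ≥0∞)) ^ (1/(2:ℝ)) ≤ 1 := by
        rw [lintegral_one, Measure.restrict_apply MeasurableSet.univ, univ_inter,
          Real.volume_Ioo]
        calc (ENNReal.ofReal (1 - r)) ^ (1/(2:ℝ)) ≤ (1:ℝ≥0∞) ^ (1/(2:ℝ)) := by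
              gcongr
              exact ENNReal.ofReal_le_one.2 (by linarith [hr.1])
        _ = 1 := ENNReal.one_rpow _
      have hbound : ENNReal.ofReal dr ≤ (V r) ^ (1/(2:ℝ)) := by
        rw [e1]
        calc ∫⁻ t in Ioo r 1, ENNReal.ofReal (w t)
            ≤ (∫⁻ t in Ioo r 1, (ENNReal.ofReal (w t)) ^ (2:ℝ)) ^ (1/(2:ℝ)) *
              (∫⁻ _ in Ioo r 1, (1:ℝ≥0∞)) ^ (1/(2:ℝ)) := hH
          _ ≤ (V r) ^ (1/(2:ℝ)) * 1 := by
              refine mul_le_mul' (le_of_eq ?_) hμ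
              congr 1
              exact lintegral_congr fun t => eA t
          _ = (V r) ^ (1/(2:ℝ)) := mul_one _
      calc ENNReal.ofReal (dr ^ 2) = (ENNReal.ofReal dr) ^ 2 :=
            ENNReal.ofReal_pow hdrnn 2
      _ ≤ ((V r) ^ (1/(2:ℝ))) ^ 2 := by gcongr
      _ = V r := by
          rw [← ENNReal.rpow_natCast ((V r) ^ (1/(2:ℝ))) 2, ← ENNReal.rpow_mul]
          norm_num
    calc ENNReal.ofReal (f ((r:ℂ) * z) ^ 2) ≤ ENNReal.ofReal (2 * f z ^ 2 + 2 * dr ^ 2) :=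
          ENNReal.ofReal_le_ofReal hsq
    _ ≤ 2 * ENNReal.ofReal (f z ^ 2) + 2 * ENNReal.ofReal (dr ^ 2) := by
        rw [ENNReal.ofReal_add (by positivity) (by positivity),
          ENNReal.ofReal_mul (by norm_num), ENNReal.ofReal_mul (by norm_num)]
        norm_num
    _ ≤ 2 * ENNReal.ofReal (f z ^ 2) + 2 * V r := by gcongr
  -- kernel for Fubini
  set F : ℝ × ℝ → ℝ≥0∞ := fun p =>
    ENNReal.ofReal (p.1 ^ γ₀) *
      ({q : ℝ × ℝ | q.1 < q.2}.indicator (fun q => ENNReal.ofReal (w q.2 ^ 2)) p) with hFdef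
  have hrpm : Measurable fun r : ℝ => r ^ γ₀ :=
    (Real.continuous_rpow_const hγ₀.le).measurable
  have hFmeas : Measurable F := by
    refine Measurable.mul ?_ ?_
    · exact (hrpm.comp measurable_fst).ennreal_ofReal
    · exact Measurable.indicator
        (((hwmeas.comp measurable_snd).pow_const 2).ennreal_ofReal)
        (measurableSet_lt measurable_fst measurable_snd)
  have claim1 : ∀ r ∈ Ioo (0:ℝ) 1,
      (∫⁻ t in Ioo (0:ℝ) 1, F (r, t)) = ENNReal.ofReal (r ^ γ₀) * V r := by
    intro r hr
    have e : ∀ t : ℝ, F (r, t)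
        = ENNReal.ofReal (r ^ γ₀) * (Ioi r).indicator (fun t => ENNReal.ofReal (w t ^ 2)) t := by
      intro t; by_cases h : r < t <;> simp [hFdef, Set.indicator, h]
    rw [lintegral_congr e, lintegral_const_mul' _ _ ENNReal.ofReal_ne_top]
    congr 1
    rw [lintegral_indicator measurableSet_Ioi, Measure.restrict_restrict measurableSet_Ioi,
      show Ioi r ∩ Ioo 0 1 = Ioo r 1 by
        ext t
        simp only [mem_inter_iff, mem_Ioi, mem_Ioo]
        exact ⟨fun h => ⟨h.1, h.2.2⟩, fun h => ⟨h.1, lt_trans hr.1 h.1, h.2⟩⟩]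
  have claim2 : ∀ t ∈ Ioo (0:ℝ) 1,
      (∫⁻ r in Ioo (0:ℝ) 1, F (r, t)) ≤ ENNReal.ofReal t * ENNReal.ofReal (w t ^ 2) := by
    intro t ht
    have e : ∀ r : ℝ, F (r, t)
        = (Iio t).indicator (fun r => ENNReal.ofReal (r ^ γ₀)) r * ENNReal.ofReal (w t ^ 2) := by
      intro r; by_cases h : r < t <;> simp [hFdef, Set.indicator, h]
    rw [lintegral_congr e, lintegral_mul_const' _ _ ENNReal.ofReal_ne_top]
    rw [lintegral_indicator measurableSet_Iio, Measure.restrict_restrict measurableSet_Iio,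
      show Iio t ∩ Ioo 0 1 = Ioo 0 t by
        ext r
        simp only [mem_inter_iff, mem_Iio, mem_Ioo]
        exact ⟨fun h => ⟨h.2.1, h.1⟩, fun h => ⟨h.2, h.1, lt_trans h.2 ht.2⟩⟩]
    refine mul_le_mul_left ?_ _
    have hint : IntegrableOn (fun r : ℝ => r ^ γ₀) (Ioo 0 t) volume := by
      refine Integrable.mono' (integrable_const 1) hrpm.aestronglyMeasurable.restrict ?_
      filter_upwards [ae_restrict_mem measurableSet_Ioo] with r hrr
      rw [Real.norm_eq_abs, abs_of_nonneg (Real.rpow_nonneg hrr.1.le _)]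
      exact Real.rpow_le_one hrr.1.le (by linarith [ht.2, hrr.2]) hγ₀.le
    have hnn : ∀ᵐ r ∂(volume.restrict (Ioo (0:ℝ) t)), 0 ≤ r ^ γ₀ := by
      filter_upwards [ae_restrict_mem measurableSet_Ioo] with r hrr
      exact Real.rpow_nonneg hrr.1.le _
    rw [← MeasureTheory.ofReal_integral_eq_lintegral_ofReal hint hnn]
    apply ENNReal.ofReal_le_ofReal
    have ecomp : ∫ r in Ioo (0:ℝ) t, r ^ γ₀ = t ^ (γ₀ + 1) / (γ₀ + 1) := by
      rw [← MeasureTheory.integral_Ioc_eq_integral_Ioo,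
        ← intervalIntegral.integral_of_le ht.1.le,
        integral_rpow (Or.inl (by linarith)), Real.zero_rpow (by linarith), sub_zero]
    rw [ecomp]
    calc t ^ (γ₀ + 1) / (γ₀ + 1) ≤ t ^ (γ₀ + 1) :=
          div_le_self (Real.rpow_nonneg ht.1.le _) (by linarith)
    _ ≤ t ^ (1:ℝ) := Real.rpow_le_rpow_of_exponent_ge ht.1 ht.2.le (by linarith)
    _ = t := Real.rpow_one t
  calc ∫⁻ r in Ioo (0:ℝ) 1, ENNReal.ofReal (r ^ γ₀ * f ((r:ℂ) * z) ^ 2)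
      ≤ ∫⁻ r in Ioo (0:ℝ) 1,
          (2 * ENNReal.ofReal (f z ^ 2) + 2 * (ENNReal.ofReal (r ^ γ₀) * V r)) := by
        refine lintegral_mono_ae ?_
        filter_upwards [ae_restrict_mem measurableSet_Ioo] with r hr
        have h0 : ENNReal.ofReal (r ^ γ₀ * f ((r:ℂ) * z) ^ 2)
            = ENNReal.ofReal (r ^ γ₀) * ENNReal.ofReal (f ((r:ℂ) * z) ^ 2) :=
          ENNReal.ofReal_mul (Real.rpow_nonneg hr.1.le _)
        have h1 : ENNReal.ofReal (r ^ γ₀) ≤ 1 :=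
          ENNReal.ofReal_le_one.2 (Real.rpow_le_one hr.1.le hr.2.le hγ₀.le)
        rw [h0]
        calc ENNReal.ofReal (r ^ γ₀) * ENNReal.ofReal (f ((r:ℂ) * z) ^ 2)
            ≤ ENNReal.ofReal (r ^ γ₀) * (2 * ENNReal.ofReal (f z ^ 2) + 2 * V r) :=
              mul_le_mul_right (pointwise r hr) _
          _ = ENNReal.ofReal (r ^ γ₀) * (2 * ENNReal.ofReal (f z ^ 2))
              + 2 * (ENNReal.ofReal (r ^ γ₀) * V r) := by ring
          _ ≤ 1 * (2 * ENNReal.ofReal (f z ^ 2)) + 2 * (ENNReal.ofReal (r ^ γ₀) * V r) := by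
              gcongr
          _ = 2 * ENNReal.ofReal (f z ^ 2) + 2 * (ENNReal.ofReal (r ^ γ₀) * V r) := by
              rw [one_mul]
    _ = 2 * ENNReal.ofReal (f z ^ 2)
        + 2 * ∫⁻ r in Ioo (0:ℝ) 1, ENNReal.ofReal (r ^ γ₀) * V r := by
        rw [lintegral_add_left measurable_const, lintegral_const,
          Measure.restrict_apply MeasurableSet.univ, univ_inter, Real.volume_Ioo,
          lintegral_const_mul' _ _ (by norm_num : (2:ℝ≥0∞) ≠ ⊤)]
        norm_num
    _ ≤ 2 * ENNReal.ofReal (f z ^ 2)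
        + 2 * ∫⁻ t in Ioo (0:ℝ) 1, ENNReal.ofReal (t * w t ^ 2) := by
        refine add_le_add_right (mul_le_mul_right ?_ (2:ℝ≥0∞)) _
        calc ∫⁻ r in Ioo (0:ℝ) 1, ENNReal.ofReal (r ^ γ₀) * V r
            = ∫⁻ r in Ioo (0:ℝ) 1, ∫⁻ t in Ioo (0:ℝ) 1, F (r, t) :=
              setLIntegral_congr_fun measurableSet_Ioo
                (fun r hr => (claim1 r hr).symm)
          _ = ∫⁻ t in Ioo (0:ℝ) 1, ∫⁻ r in Ioo (0:ℝ) 1, F (r, t) :=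
              lintegral_lintegral_swap hFmeas.aemeasurable
          _ ≤ ∫⁻ t in Ioo (0:ℝ) 1, ENNReal.ofReal t * ENNReal.ofReal (w t ^ 2) := by
              refine lintegral_mono_ae ?_
              filter_upwards [ae_restrict_mem measurableSet_Ioo] with t ht
              exact claim2 t ht
          _ = ∫⁻ t in Ioo (0:ℝ) 1, ENNReal.ofReal (t * w t ^ 2) :=
              setLIntegral_congr_fun measurableSet_Ioo
                (fun t ht =>
                  (ENNReal.ofReal_mul ht.1.le).symm)

theorem measurable_norm_rpow (c : ℝ) : Measurable fun z : ℂ => ‖z‖ ^ c := by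
  have he : (fun z : ℂ => ‖z‖ ^ c) = fun z =>
      if ‖z‖ = 0 then (if c = 0 then 1 else 0) else Real.exp (Real.log ‖z‖ * c) := by
    ext z; exact Real.rpow_def_of_nonneg (norm_nonneg z) c
  rw [he]
  refine Measurable.ite ?_ measurable_const ?_
  · exact measurable_norm (measurableSet_singleton (0:ℝ))
  · exact Real.measurable_exp.comp ((Real.measurable_log.comp measurable_norm).mul_const c)

/-- Weighted Poincaré inequality on the unit disk for Lipschitz functions:
`∫_{B_1} |z|^(γ₀-1) f² ≤ C ∫_{B_1} |Df|² + C ∫_{∂B_1} f²`, `C` depending only on `γ₀`. -/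
theorem stmt_0 (γ₀ : ℝ) (hγ₀ : 0 < γ₀) (hγ₁ : γ₀ < 1) :
    ∃ C : ℝ, 0 < C ∧
      ∀ (f : ℂ → ℝ) (K : NNReal), LipschitzWith K f →
        (∫ z in Metric.ball (0 : ℂ) 1, ‖z‖ ^ (γ₀ - 1) * (f z) ^ 2) ≤
          C * (∫ z in Metric.ball (0 : ℂ) 1, ‖fderiv ℝ f z‖ ^ 2) +
          C * (∫ θ in (0 : ℝ)..(2 * π), (f (Complex.exp (θ * Complex.I))) ^ 2) := by
  refine ⟨2, by norm_num, fun f K hf => ?_⟩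
  have hfc : Continuous f := hf.continuous
  have hnr : Measurable fun z : ℂ => ‖z‖ ^ (γ₀ - 1) := measurable_norm_rpow _
  set G1 : ℂ → ℝ≥0∞ := fun z => ENNReal.ofReal (‖z‖ ^ (γ₀ - 1) * f z ^ 2) with hG1def
  set G2 : ℂ → ℝ≥0∞ := fun z => ENNReal.ofReal (‖fderiv ℝ f z‖ ^ 2) with hG2def
  have hG1m : Measurable G1 := (hnr.mul ((hfc.measurable).pow_const 2)).ennreal_ofReal
  have hG2m : Measurable G2 := (((measurable_fderiv ℝ f).norm).pow_const 2).ennreal_ofReal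
  have hmp : Measurable (Complex.polarCoord.symm : ℝ × ℝ → ℂ) := by
    have e : (Complex.polarCoord.symm : ℝ × ℝ → ℂ)
        = fun p : ℝ × ℝ => (p.1 : ℂ) * Complex.exp (p.2 * Complex.I) := by
      ext p; exact polar_symm_exp p.1 p.2
    rw [e]; fun_prop
  have hrestr : (volume : Measure (ℝ × ℝ)).restrict (Ioo (0:ℝ) 1 ×ˢ Ioo (-π) π)
      = (volume.restrict (Ioo (0:ℝ) 1)).prod (volume.restrict (Ioo (-π) π)) := by
    rw [Measure.volume_eq_prod, Measure.prod_restrict]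
  have hT' : MeasurableSet (Ioo (0:ℝ) 1 ×ˢ Ioo (-π) π) :=
    measurableSet_Ioo.prod measurableSet_Ioo
  -- a.e. differentiability along rays
  have hper : ∀ᵐ (θ : ℝ) ∂(volume.restrict (Ioo (-π) π)),
      ∀ᵐ (r : ℝ) ∂(volume.restrict (Ioo (0:ℝ) 1)),
        DifferentiableAt ℝ f ((r:ℂ) * Complex.exp (θ * Complex.I)) := by
    set N : Set ℂ := {z | ¬ DifferentiableAt ℝ f z} with hNdef
    have hNmeas : MeasurableSet N := (measurableSet_of_differentiableAt ℝ f).compl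
    have hN0 : volume N = 0 := by
      have h := hf.ae_differentiableAt (μ := (volume : Measure ℂ))
      rwa [ae_iff] at h
    have hχm : Measurable (N.indicator (fun _ => (1:ℝ≥0∞))) :=
      measurable_const.indicator hNmeas
    have hball : ∫⁻ z in Metric.ball (0:ℂ) 1, N.indicator (fun _ => (1:ℝ≥0∞)) z = 0 := by
      apply le_antisymm _ zero_le
      calc ∫⁻ z in Metric.ball (0:ℂ) 1, N.indicator (fun _ => (1:ℝ≥0∞)) z
          ≤ ∫⁻ z, N.indicator (fun _ => (1:ℝ≥0∞)) z := setLIntegral_le_lintegral _ _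
        _ = volume N := lintegral_indicator_one hNmeas
        _ = 0 := hN0
    rw [lintegral_ball_polar _ hχm] at hball
    have hintm : Measurable fun p : ℝ × ℝ =>
        ENNReal.ofReal p.1 * N.indicator (fun _ => (1:ℝ≥0∞)) (Complex.polarCoord.symm p) :=
      (measurable_fst.ennreal_ofReal).mul (hχm.comp hmp)
    have hae := (lintegral_eq_zero_iff hintm).1 hball
    have haeQ : ∀ᵐ p : ℝ × ℝ ∂(volume.restrict (Ioo (0:ℝ) 1 ×ˢ Ioo (-π) π)),
        DifferentiableAt ℝ f ((p.1:ℂ) * Complex.exp (p.2 * Complex.I)) := by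
      filter_upwards [hae, ae_restrict_mem hT'] with p h1 h2
      have hp1 : (0:ℝ) < p.1 := h2.1.1
      have hne : ENNReal.ofReal p.1 ≠ 0 := by
        simp [ENNReal.ofReal_eq_zero, not_le, hp1]
      have h3 : N.indicator (fun _ => (1:ℝ≥0∞)) (Complex.polarCoord.symm p) = 0 := by
        rcases mul_eq_zero.1 h1 with h | h
        · exact absurd h hne
        · exact h
      have h4 : Complex.polarCoord.symm p ∉ N := by
        intro hmem
        rw [Set.indicator_of_mem hmem] at h3
        exact one_ne_zero h3
      have h5 : DifferentiableAt ℝ f (Complex.polarCoord.symm p) := not_not.1 h4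
      rwa [polar_symm_exp p.1 p.2] at h5
    rw [hrestr] at haeQ
    -- swap coordinates
    have hS : MeasurableSet {p : ℝ × ℝ |
        ¬ DifferentiableAt ℝ f ((p.1:ℂ) * Complex.exp (p.2 * Complex.I))} := by
      have hmm : Measurable fun p : ℝ × ℝ => (p.1:ℂ) * Complex.exp (p.2 * Complex.I) := by
        fun_prop
      exact (hmm (measurableSet_of_differentiableAt ℝ f)).compl
    have hswap : ∀ᵐ q : ℝ × ℝ
        ∂((volume.restrict (Ioo (-π) π)).prod (volume.restrict (Ioo (0:ℝ) 1))),
        DifferentiableAt ℝ f ((q.2:ℂ) * Complex.exp (q.1 * Complex.I)) := by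
      rw [ae_iff] at haeQ ⊢
      calc ((volume.restrict (Ioo (-π) π)).prod (volume.restrict (Ioo (0:ℝ) 1)))
            {q : ℝ × ℝ | ¬ DifferentiableAt ℝ f ((q.2:ℂ) * Complex.exp (q.1 * Complex.I))}
          = ((volume.restrict (Ioo (-π) π)).prod (volume.restrict (Ioo (0:ℝ) 1)))
            (Prod.swap ⁻¹' {p : ℝ × ℝ |
              ¬ DifferentiableAt ℝ f ((p.1:ℂ) * Complex.exp (p.2 * Complex.I))}) := rfl
        _ = (Measure.map Prod.swap
              ((volume.restrict (Ioo (-π) π)).prod (volume.restrict (Ioo (0:ℝ) 1)))) _ :=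
            (Measure.map_apply measurable_swap hS).symm
        _ = ((volume.restrict (Ioo (0:ℝ) 1)).prod (volume.restrict (Ioo (-π) π))) _ := by
            rw [Measure.prod_swap]
        _ = 0 := haeQ
    exact Measure.ae_ae_of_ae_prod hswap
  -- main lintegral estimate
  set B : ℝ≥0∞ := ∫⁻ θ in Ioo (-π) π, ENNReal.ofReal (f (Complex.exp (θ * Complex.I)) ^ 2)
    with hBdef
  set D : ℝ≥0∞ := ∫⁻ z in Metric.ball (0:ℂ) 1, G2 z with hDdef
  have hDiter : D = ∫⁻ θ in Ioo (-π) π, ∫⁻ t in Ioo (0:ℝ) 1,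
      ENNReal.ofReal (t * ‖fderiv ℝ f ((t:ℂ) * Complex.exp (θ * Complex.I))‖ ^ 2) := by
    rw [hDdef, lintegral_ball_polar_iter G2 hG2m]
    refine lintegral_congr fun θ => setLIntegral_congr_fun measurableSet_Ioo
      (fun t ht => ?_)
    simp only [hG2def]
    rw [← ENNReal.ofReal_mul ht.1.le]
  have key : ∫⁻ z in Metric.ball (0:ℂ) 1, G1 z ≤ 2 * B + 2 * D := by
    rw [lintegral_ball_polar_iter G1 hG1m]
    have step : ∀ᵐ (θ : ℝ) ∂(volume.restrict (Ioo (-π) π)),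
        (∫⁻ r in Ioo (0:ℝ) 1,
          ENNReal.ofReal r * G1 ((r:ℂ) * Complex.exp (θ * Complex.I)))
        ≤ 2 * ENNReal.ofReal (f (Complex.exp (θ * Complex.I)) ^ 2)
          + 2 * ∫⁻ t in Ioo (0:ℝ) 1,
              ENNReal.ofReal (t * ‖fderiv ℝ f ((t:ℂ) * Complex.exp (θ * Complex.I))‖ ^ 2) := by
      filter_upwards [hper] with θ hθ
      have hz1 : ‖Complex.exp ((θ:ℂ) * Complex.I)‖ = 1 := by
        rw [Complex.norm_exp_ofReal_mul_I]
      have e1 : ∀ r ∈ Ioo (0:ℝ) 1,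
          ENNReal.ofReal r * G1 ((r:ℂ) * Complex.exp (θ * Complex.I))
            = ENNReal.ofReal (r ^ γ₀ * f ((r:ℂ) * Complex.exp (θ * Complex.I)) ^ 2) := by
        intro r hr
        simp only [hG1def]
        have hnorm : ‖(r:ℂ) * Complex.exp (θ * Complex.I)‖ = r := by
          rw [norm_mul, hz1, mul_one, Complex.norm_real, Real.norm_eq_abs,
            abs_of_pos hr.1]
        rw [hnorm, ← ENNReal.ofReal_mul hr.1.le]
        congr 1
        have hpow : r * r ^ (γ₀ - 1) = r ^ γ₀ := by
          have h2 := Real.rpow_one_add' (le_of_lt hr.1) (y := γ₀ - 1)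
            (by rw [show 1 + (γ₀ - 1) = γ₀ by ring]; exact hγ₀.ne')
          rw [show 1 + (γ₀ - 1) = γ₀ by ring] at h2
          exact h2.symm
        rw [← mul_assoc, hpow]
      rw [setLIntegral_congr_fun measurableSet_Ioo e1]
      exact core_ray γ₀ hγ₀ hγ₁ hf hz1 hθ
    calc ∫⁻ θ in Ioo (-π) π, ∫⁻ r in Ioo (0:ℝ) 1,
          ENNReal.ofReal r * G1 ((r:ℂ) * Complex.exp (θ * Complex.I))
        ≤ ∫⁻ θ in Ioo (-π) π,
            (2 * ENNReal.ofReal (f (Complex.exp (θ * Complex.I)) ^ 2)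
              + 2 * ∫⁻ t in Ioo (0:ℝ) 1,
                ENNReal.ofReal (t * ‖fderiv ℝ f ((t:ℂ) * Complex.exp (θ * Complex.I))‖ ^ 2)) :=
          lintegral_mono_ae step
      _ = 2 * B + 2 * D := by
          rw [lintegral_add_left (by
            exact (measurable_const.mul ((((hfc.comp (by fun_prop)).measurable).pow_const
              2).ennreal_ofReal)) : Measurable fun θ : ℝ =>
                2 * ENNReal.ofReal (f (Complex.exp (θ * Complex.I)) ^ 2)),
            lintegral_const_mul' _ _ (by norm_num : (2:ℝ≥0∞) ≠ ⊤),
            lintegral_const_mul' _ _ (by norm_num : (2:ℝ≥0∞) ≠ ⊤), hDiter]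
  -- finiteness
  have hDfin : D ≠ ⊤ := by
    have hb : D ≤ ENNReal.ofReal ((K:ℝ)^2) * volume (Metric.ball (0:ℂ) 1) := by
      rw [hDdef]
      calc ∫⁻ z in Metric.ball (0:ℂ) 1, G2 z
          ≤ ∫⁻ _z in Metric.ball (0:ℂ) 1, ENNReal.ofReal ((K:ℝ)^2) := by
            refine lintegral_mono fun z => ?_
            simp only [hG2def]
            refine ENNReal.ofReal_le_ofReal ?_
            have h1 : ‖fderiv ℝ f z‖ ≤ (K:ℝ) := norm_fderiv_le_of_lipschitz ℝ hf
            nlinarith [norm_nonneg (fderiv ℝ f z)]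
        _ = ENNReal.ofReal ((K:ℝ)^2) * volume (Metric.ball (0:ℂ) 1) := by
            rw [lintegral_const, Measure.restrict_apply MeasurableSet.univ, univ_inter]
    exact ne_top_of_le_ne_top
      (ENNReal.mul_ne_top ENNReal.ofReal_ne_top (measure_ball_lt_top).ne) hb
  have hBfin : B ≠ ⊤ := by
    have hb : B ≤ ENNReal.ofReal ((|f 0| + K)^2) * volume (Ioo (-π) π) := by
      rw [hBdef]
      calc (∫⁻ θ in Ioo (-π) π, ENNReal.ofReal (f (Complex.exp (θ * Complex.I)) ^ 2))
          ≤ ∫⁻ _θ in Ioo (-π) π, ENNReal.ofReal ((|f 0| + K)^2) := by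
            refine lintegral_mono fun θ => ?_
            refine ENNReal.ofReal_le_ofReal ?_
            set x := Complex.exp ((θ:ℂ) * Complex.I) with hx
            have h1 : dist (f x) (f 0) ≤ (K:ℝ) * dist x 0 := hf.dist_le_mul x 0
            have h2 : dist x 0 = 1 := by
              rw [dist_zero_right, hx, Complex.norm_exp_ofReal_mul_I]
            rw [h2, mul_one, Real.dist_eq] at h1
            have h3 : |f x| ≤ |f 0| + (K:ℝ) := by
              have h4 := abs_sub_abs_le_abs_sub (f x) (f 0)
              linarith
            calc f x ^ 2 = |f x| ^ 2 := (sq_abs _).symm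
              _ ≤ (|f 0| + (K:ℝ)) ^ 2 := by
                  exact pow_le_pow_left₀ (abs_nonneg _) h3 2
        _ = _ := by rw [lintegral_const, Measure.restrict_apply MeasurableSet.univ, univ_inter]
    refine ne_top_of_le_ne_top (ENNReal.mul_ne_top ENNReal.ofReal_ne_top ?_) hb
    rw [Real.volume_Ioo]
    exact ENNReal.ofReal_ne_top
  have hRfin : 2 * B + 2 * D ≠ ⊤ := by
    exact ENNReal.add_ne_top.2
      ⟨ENNReal.mul_ne_top (by norm_num) hBfin, ENNReal.mul_ne_top (by norm_num) hDfin⟩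
  -- conversions to real integrals
  have hLHS : (∫ z in Metric.ball (0:ℂ) 1, ‖z‖ ^ (γ₀ - 1) * f z ^ 2)
      = (∫⁻ z in Metric.ball (0:ℂ) 1, G1 z).toReal := by
    rw [integral_eq_lintegral_of_nonneg_ae
      (Eventually.of_forall fun z =>
        mul_nonneg (Real.rpow_nonneg (norm_nonneg z) _) (sq_nonneg _))
      ((hnr.mul (hfc.measurable.pow_const 2)).aestronglyMeasurable)]
  have hDreal : (∫ z in Metric.ball (0:ℂ) 1, ‖fderiv ℝ f z‖ ^ 2) = D.toReal := by
    rw [hDdef, integral_eq_lintegral_of_nonneg_ae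
      (Eventually.of_forall fun z => sq_nonneg _)
      (((measurable_fderiv ℝ f).norm.pow_const 2).aestronglyMeasurable)]
  have hBreal : (∫ θ in (0:ℝ)..(2*π), f (Complex.exp (θ * Complex.I)) ^ 2) = B.toReal := by
    have h1 : (∫ θ in Ioo (-π) π, f (Complex.exp (θ * Complex.I)) ^ 2) = B.toReal := by
      rw [hBdef, integral_eq_lintegral_of_nonneg_ae
        (Eventually.of_forall fun θ => sq_nonneg _)
        (((by fun_prop :
          Continuous fun θ : ℝ => f (Complex.exp ((θ:ℂ) * Complex.I))).measurable.pow_const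
            2).aestronglyMeasurable)]
    rw [← h1, ← MeasureTheory.integral_Ioc_eq_integral_Ioo,
      ← intervalIntegral.integral_of_le (by linarith [Real.pi_pos] : -π ≤ π)]
    have hperiod : Function.Periodic (fun θ : ℝ => f (Complex.exp (θ * Complex.I)) ^ 2)
        (2*π) := by
      intro θ
      have he : ((θ + 2*π : ℝ) : ℂ) * Complex.I = (θ:ℂ) * Complex.I + 2*π*Complex.I := by
        push_cast; ring
      simp only [he, Complex.exp_add, Complex.exp_two_pi_mul_I, mul_one]
    have h2 := hperiod.intervalIntegral_add_eq 0 (-π)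
    rw [zero_add] at h2
    rw [h2, show -π + 2*π = π by ring]
  -- final computation
  rw [hLHS, hDreal, hBreal]
  calc (∫⁻ z in Metric.ball (0:ℂ) 1, G1 z).toReal ≤ (2 * B + 2 * D).toReal :=
        ENNReal.toReal_mono hRfin key
    _ = 2 * B.toReal + 2 * D.toReal := by
        rw [ENNReal.toReal_add (ENNReal.mul_ne_top (by norm_num) hBfin)
          (ENNReal.mul_ne_top (by norm_num) hDfin), ENNReal.toReal_mul, ENNReal.toReal_mul]
        norm_num
    _ = 2 * D.toReal + 2 * B.toReal := by ring
end

section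
/- Let D : (0,1) → (0,∞) be absolutely continuous and nondecreasing, let η > 0, and suppose (1/2) D(r) ≤ C·D(r)^{1+η/4} + C·r·D(r)^{η/4}·D'(r) + e(r) for all small r, where e ≥ 0 satisfies ∫_0^r e(t)/(t D(t)) dt ≤ C r^{η/2} and D(r) ≤ C r². Then D cannot be strictly positive on any interval (0, r₁); i.e., dividing by r D(r) and integrating the inequality log(r/s) ≤ C ∫_s^r (D(ρ)^{η/4}/ρ + D(ρ)^{η/4−1} D'(ρ) + e(ρ)/(ρD(ρ))) dρ ≤ C r^{η/2} leads to a contradiction as s → 0. -/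
open MeasureTheory

set_option maxHeartbeats 1000000 in
/-- The contradiction argument in the proof that the limit of the inverse frequency is
positive: an absolutely continuous, nondecreasing, strictly positive `D` on `(0,1)` with
`(1/2) D(r) ≤ C D(r)^{1+η/4} + C r D(r)^{η/4} D'(r) + e(r)` for small `r`,
`∫_0^r e(t)/(t D(t)) dt ≤ C r^{η/2}` and `D(r) ≤ C r²` cannot exist. -/
theorem stmt_10 (η : ℝ) (hη : 0 < η) (C : ℝ) (hC : 0 < C)
    (r₁ : ℝ) (hr₁ : 0 < r₁) (hr₁1 : r₁ ≤ 1) (D D' e : ℝ → ℝ)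
    (hDpos : ∀ r ∈ Set.Ioo (0 : ℝ) 1, 0 < D r)
    (hmono : MonotoneOn D (Set.Ioo (0 : ℝ) 1))
    (hD'int : IntegrableOn D' (Set.Ioo (0 : ℝ) 1))
    (hderiv : ∀ᵐ r ∂(volume.restrict (Set.Ioo (0 : ℝ) 1)), HasDerivAt D (D' r) r)
    (hFTC : ∀ s r : ℝ, 0 < s → s ≤ r → r < 1 → D r - D s = ∫ t in Set.Ioo s r, D' t)
    (he : ∀ r ∈ Set.Ioo (0 : ℝ) 1, 0 ≤ e r)
    (heint : IntegrableOn (fun t => e t / (t * D t)) (Set.Ioo (0 : ℝ) 1))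
    (hmain : ∀ r ∈ Set.Ioo (0 : ℝ) r₁,
      (1 / 2) * D r ≤ C * D r ^ (1 + η / 4) + C * r * D r ^ (η / 4) * D' r + e r)
    (herr : ∀ r ∈ Set.Ioo (0 : ℝ) 1,
      (∫ t in Set.Ioo (0 : ℝ) r, e t / (t * D t)) ≤ C * r ^ (η / 2))
    (hD2 : ∀ r ∈ Set.Ioo (0 : ℝ) 1, D r ≤ C * r ^ 2) :
    False := by
  set α := η / 4 with hαdef
  have hα : 0 < α := by positivity
  set r : ℝ := r₁ / 2 with hrdef
  have hr0 : 0 < r := by positivity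
  have hrr1 : r < r₁ := by rw [hrdef]; linarith
  have hr1 : r < 1 := by rw [hrdef]; linarith
  have hrIoo : r ∈ Set.Ioo (0:ℝ) 1 := ⟨hr0, hr1⟩
  set M := D r with hMdef
  have hM : 0 < M := hDpos r hrIoo
  -- continuity of D on compact subintervals
  have hcont : ∀ a b : ℝ, 0 < a → b < 1 → ContinuousOn D (Set.Icc a b) := by
    intro a b ha hb
    rcases le_or_gt a b with hab | hab
    · have hsub : Set.Icc (a/2) b ⊆ Set.Ioo (0:ℝ) 1 := fun t ht =>
        ⟨by linarith [ht.1], lt_of_le_of_lt ht.2 hb⟩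
      have hint : IntegrableOn D' (Set.Icc (a/2) b) := hD'int.mono_set hsub
      have hprim : ContinuousOn (fun x => ∫ t in Set.Ioc (a/2) x, D' t) (Set.Icc (a/2) b) :=
        intervalIntegral.continuousOn_primitive hint
      have heq : ∀ x ∈ Set.Icc a b, D x = D (a/2) + ∫ t in Set.Ioc (a/2) x, D' t := by
        intro x hx
        have h1 := hFTC (a/2) x (by linarith) (by linarith [hx.1]) (lt_of_le_of_lt hx.2 hb)
        rw [← MeasureTheory.integral_Ioc_eq_integral_Ioo] at h1
        linarith
      have hc2 : ContinuousOn (fun x => D (a/2) + ∫ t in Set.Ioc (a/2) x, D' t) (Set.Icc a b) :=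
        (continuousOn_const.add hprim).mono (Set.Icc_subset_Icc (by linarith) le_rfl)
      exact hc2.congr heq
    · rw [Set.Icc_eq_empty (not_le.mpr hab)]; exact continuousOn_empty _
  -- D' ≥ 0 a.e.
  have hD'nn : ∀ᵐ t ∂(volume.restrict (Set.Ioo (0:ℝ) 1)), 0 ≤ D' t := by
    filter_upwards [hderiv, ae_restrict_mem measurableSet_Ioo] with t ht hmem
    have h1 : HasDerivWithinAt D (D' t) (Set.Ioi t) t := ht.hasDerivWithinAt
    have h2 : Filter.Tendsto (slope D t) (nhdsWithin t (Set.Ioi t)) (nhds (D' t)) :=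
      (hasDerivWithinAt_iff_tendsto_slope' (by simp : t ∉ Set.Ioi t)).mp h1
    have h3 : ∀ᶠ x in nhdsWithin t (Set.Ioi t), 0 ≤ slope D t x := by
      have hev : ∀ᶠ x in nhdsWithin t (Set.Ioi t), x < 1 :=
        eventually_nhdsWithin_of_eventually_nhds (eventually_lt_nhds hmem.2)
      filter_upwards [hev, self_mem_nhdsWithin] with x hx1 hx2
      have hxt : t < x := hx2
      have hDle : D t ≤ D x := hmono hmem ⟨lt_trans hmem.1 hxt, hx1⟩ hxt.le
      rw [slope_def_field]
      apply div_nonneg (by linarith) (by linarith)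
    exact ge_of_tendsto h2 h3
  -- integrability helpers
  have hIntD' : ∀ a b : ℝ, 0 < a → b < 1 → IntegrableOn D' (Set.Ioc a b) := by
    intro a b ha hb
    exact hD'int.mono_set (fun t ht => ⟨lt_trans ha ht.1, lt_of_le_of_lt ht.2 hb⟩)
  have hInt2 : ∀ a b : ℝ, 0 < a → b < 1 →
      IntegrableOn (fun t => D t ^ (α-1) * D' t) (Set.Ioc a b) := by
    intro a b ha hb
    rcases le_or_gt a b with hab | hab
    · have hsub01 : Set.Icc a b ⊆ Set.Ioo (0:ℝ) 1 := fun t ht =>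
        ⟨lt_of_lt_of_le ha ht.1, lt_of_le_of_lt ht.2 hb⟩
      have hg : ContinuousOn (fun t => D t ^ (α-1)) (Set.Icc a b) :=
        (hcont a b ha hb).rpow_const (fun x hx => Or.inl (ne_of_gt (hDpos x (hsub01 hx))))
      obtain ⟨Cb, hCb⟩ := (isCompact_Icc).exists_bound_of_continuousOn hg
      have hmeas : AEStronglyMeasurable (fun t => D t ^ (α-1))
          (volume.restrict (Set.Ioc a b)) :=
        (hg.aestronglyMeasurable measurableSet_Icc).mono_measure
          (Measure.restrict_mono Set.Ioc_subset_Icc_self le_rfl)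
      refine Integrable.bdd_mul (c := Cb) (hIntD' a b ha hb) hmeas ?_
      refine (ae_restrict_iff' measurableSet_Ioc).mpr (Filter.Eventually.of_forall ?_)
      intro x hx
      exact hCb x (Set.Ioc_subset_Icc_self hx)
    · rw [Set.Ioc_eq_empty (not_lt.mpr hab.le)]
      exact integrableOn_empty
  -- FTC on Ioc
  have hFTC' : ∀ a b : ℝ, 0 < a → a ≤ b → b < 1 →
      (∫ t in Set.Ioc a b, D' t) = D b - D a := by
    intro a b ha hab hb
    rw [MeasureTheory.integral_Ioc_eq_integral_Ioo]
    exact (hFTC a b ha hab hb).symm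
  -- the single-interval estimate
  have hstep : ∀ a b lo hi : ℝ, 0 < a → a ≤ b → b < 1 → 0 < lo →
      (∀ t ∈ Set.Ioc a b, lo ≤ D t ∧ D t ≤ hi) →
      (∫ t in Set.Ioc a b, D t ^ (α-1) * D' t)
        ≤ max (lo ^ (α-1)) (hi ^ (α-1)) * (D b - D a) := by
    intro a b lo hi ha hab hb hlo hbnd
    have hbd0 : 0 ≤ max (lo ^ (α-1)) (hi ^ (α-1)) :=
      le_trans (Real.rpow_nonneg hlo.le _) (le_max_left _ _)
    have hsub01 : Set.Ioc a b ⊆ Set.Ioo (0:ℝ) 1 := fun t ht =>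
      ⟨lt_trans ha ht.1, lt_of_le_of_lt ht.2 hb⟩
    have hpt : ∀ᵐ t ∂(volume.restrict (Set.Ioc a b)),
        D t ^ (α-1) * D' t ≤ max (lo ^ (α-1)) (hi ^ (α-1)) * D' t := by
      have h1 : ∀ᵐ t ∂(volume.restrict (Set.Ioc a b)), 0 ≤ D' t :=
        ae_restrict_of_ae_restrict_of_subset hsub01 hD'nn
      filter_upwards [h1, ae_restrict_mem measurableSet_Ioc] with t h0 hmem
      have hb1 := (hbnd t hmem).1
      have hb2 := (hbnd t hmem).2
      have hDt : 0 < D t := lt_of_lt_of_le hlo hb1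
      have hrb : D t ^ (α-1) ≤ max (lo ^ (α-1)) (hi ^ (α-1)) := by
        rcases le_or_gt 1 α with h1α | h1α
        · exact le_trans (Real.rpow_le_rpow hDt.le hb2 (by linarith)) (le_max_right _ _)
        · exact le_trans (Real.rpow_le_rpow_of_nonpos hlo hb1 (by linarith)) (le_max_left _ _)
      exact mul_le_mul_of_nonneg_right hrb h0
    calc (∫ t in Set.Ioc a b, D t ^ (α-1) * D' t)
        ≤ ∫ t in Set.Ioc a b, max (lo ^ (α-1)) (hi ^ (α-1)) * D' t :=
          integral_mono_ae (hInt2 a b ha hb) ((hIntD' a b ha hb).const_mul _) hpt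
      _ = max (lo ^ (α-1)) (hi ^ (α-1)) * (D b - D a) := by
          rw [MeasureTheory.integral_const_mul, hFTC' a b ha hab hb]
  -- the key integrated inequality
  have hkey : ∀ s' : ℝ, 0 < s' → s' ≤ r →
      Real.log r - Real.log s' ≤ 2 * (C * C ^ α * r ^ (2*α) / (2*α)) + 2 * (C * r ^ (η/2))
        + 2 * C * (∫ t in Set.Ioc s' r, D t ^ (α-1) * D' t) := by
    intro s' hs'0 hs'r
    have hsub01 : Set.Ioc s' r ⊆ Set.Ioo (0:ℝ) 1 := fun t ht =>
      ⟨lt_trans hs'0 ht.1, lt_of_le_of_lt ht.2 hr1⟩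
    have hsubIcc : Set.Ioc s' r ⊆ Set.Icc s' r := Set.Ioc_subset_Icc_self
    have hIccsub : Set.Icc s' r ⊆ Set.Ioo (0:ℝ) 1 := fun t ht =>
      ⟨lt_of_lt_of_le hs'0 ht.1, lt_of_le_of_lt ht.2 hr1⟩
    -- integrabilities
    have hi1 : IntegrableOn (fun ρ => 1/(2*ρ)) (Set.Ioc s' r) := by
      refine ((ContinuousOn.div continuousOn_const
        ((continuous_const.mul continuous_id).continuousOn) ?_).integrableOn_Icc).mono_set
        hsubIcc
      intro x hx
      have : 0 < x := lt_of_lt_of_le hs'0 hx.1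
      show (2:ℝ) * x ≠ 0
      positivity
    have hi2 : IntegrableOn (fun ρ => C * D ρ ^ α / ρ) (Set.Ioc s' r) := by
      refine ((ContinuousOn.div
        (continuousOn_const.mul ((hcont s' r hs'0 hr1).rpow_const
          (fun x hx => Or.inr hα.le))) continuousOn_id ?_).integrableOn_Icc).mono_set hsubIcc
      intro x hx
      exact ne_of_gt (lt_of_lt_of_le hs'0 hx.1)
    have hi3 : IntegrableOn (fun ρ => C * (D ρ ^ (α-1) * D' ρ)) (Set.Ioc s' r) :=
      (hInt2 s' r hs'0 hr1).const_mul C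
    have hi4 : IntegrableOn (fun ρ => e ρ / (ρ * D ρ)) (Set.Ioc s' r) :=
      heint.mono_set hsub01
    -- pointwise inequality
    have hpt : ∀ ρ ∈ Set.Ioc s' r, 1/(2*ρ) ≤
        C * D ρ ^ α / ρ + C * (D ρ ^ (α-1) * D' ρ) + e ρ / (ρ * D ρ) := by
      intro ρ hρ
      have hρ0 : 0 < ρ := lt_trans hs'0 hρ.1
      have hρD : 0 < D ρ := hDpos ρ (hsub01 hρ)
      have hρr₁ : ρ < r₁ := lt_of_le_of_lt hρ.2 hrr1
      have hm := hmain ρ ⟨hρ0, hρr₁⟩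
      have e1 : D ρ ^ (1 + α) = D ρ ^ (α-1) * (D ρ * D ρ) := by
        rw [show (1 + α) = (α-1) + 2 by ring, Real.rpow_add hρD,
          show ((2:ℝ)) = ((2:ℕ):ℝ) by norm_num, Real.rpow_natCast]
        ring
      have e2 : D ρ ^ α = D ρ ^ (α-1) * D ρ := by
        rw [← Real.rpow_add_one (ne_of_gt hρD) (α-1), sub_add_cancel]
      rw [e1, e2] at hm
      rw [e2]
      have hden : (0:ℝ) < ρ * D ρ := by positivity
      calc 1/(2*ρ) = ((1/2) * D ρ) / (ρ * D ρ) := by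
            field_simp
        _ ≤ (C * (D ρ ^ (α-1) * (D ρ * D ρ)) + C * ρ * (D ρ ^ (α-1) * D ρ) * D' ρ + e ρ)
              / (ρ * D ρ) := by
            exact div_le_div_of_nonneg_right hm hden.le
        _ = C * (D ρ ^ (α-1) * D ρ) / ρ + C * (D ρ ^ (α-1) * D' ρ) + e ρ / (ρ * D ρ) := by
            field_simp
    -- LHS value
    have hI1 : (∫ ρ in Set.Ioc s' r, 1/(2*ρ)) = (1/2) * (Real.log r - Real.log s') := by
      rw [← intervalIntegral.integral_of_le hs'r]
      have : ∀ x : ℝ, 1/(2*x) = (1/2) * x⁻¹ := by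
        intro x
        rw [one_div, mul_inv, one_div]
      simp_rw [this]
      rw [intervalIntegral.integral_const_mul, integral_inv_of_pos hs'0 hr0,
        Real.log_div (ne_of_gt hr0) (ne_of_gt hs'0)]
    -- first term bound
    have hI2 : (∫ ρ in Set.Ioc s' r, C * D ρ ^ α / ρ) ≤ C * C ^ α * r ^ (2*α) / (2*α) := by
      have hig : IntegrableOn (fun ρ => C * C ^ α * ρ ^ (2*α - 1)) (Set.Ioc s' r) := by
        refine ((continuousOn_const.mul (ContinuousOn.rpow_const continuousOn_id ?_))
          |>.integrableOn_Icc).mono_set hsubIcc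
        intro x hx
        exact Or.inl (ne_of_gt (lt_of_lt_of_le hs'0 hx.1))
      have hptw : ∀ ρ ∈ Set.Ioc s' r, C * D ρ ^ α / ρ ≤ C * C ^ α * ρ ^ (2*α - 1) := by
        intro ρ hρ
        have hρ0 : 0 < ρ := lt_trans hs'0 hρ.1
        have h1 : D ρ ^ α ≤ (C * ρ ^ 2) ^ α :=
          Real.rpow_le_rpow (hDpos ρ (hsub01 hρ)).le (hD2 ρ (hsub01 hρ)) hα.le
        have h2 : (C * ρ ^ 2) ^ α = C ^ α * ρ ^ (2*α) := by
          rw [Real.mul_rpow hC.le (sq_nonneg ρ), ← Real.rpow_natCast ρ 2,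
            ← Real.rpow_mul hρ0.le]
          norm_num
        have h3 : C * D ρ ^ α / ρ ≤ C * (C ^ α * ρ ^ (2*α)) / ρ := by
          gcongr
          rw [← h2]; exact h1
        refine h3.trans_eq ?_
        rw [Real.rpow_sub hρ0, Real.rpow_one]
        ring
      calc (∫ ρ in Set.Ioc s' r, C * D ρ ^ α / ρ)
          ≤ ∫ ρ in Set.Ioc s' r, C * C ^ α * ρ ^ (2*α - 1) :=
            setIntegral_mono_on hi2 hig measurableSet_Ioc hptw
        _ = C * C ^ α * ((r ^ (2*α - 1 + 1) - s' ^ (2*α - 1 + 1)) / (2*α - 1 + 1)) := by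
            rw [← intervalIntegral.integral_of_le hs'r, intervalIntegral.integral_const_mul,
              integral_rpow (Or.inl (by linarith))]
        _ ≤ C * C ^ α * r ^ (2*α) / (2*α) := by
            rw [show 2*α - 1 + 1 = 2*α by ring]
            have h5 : 0 ≤ s' ^ (2*α) := Real.rpow_nonneg hs'0.le _
            have h6 : (r ^ (2*α) - s' ^ (2*α)) / (2*α) ≤ r ^ (2*α) / (2*α) := by
              gcongr
              all_goals linarith
            calc C * C ^ α * ((r ^ (2*α) - s' ^ (2*α)) / (2*α))
                ≤ C * C ^ α * (r ^ (2*α) / (2*α)) := by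
                  apply mul_le_mul_of_nonneg_left h6
                  positivity
              _ = C * C ^ α * r ^ (2*α) / (2*α) := by ring
    -- error term bound
    have hI4 : (∫ ρ in Set.Ioc s' r, e ρ / (ρ * D ρ)) ≤ C * r ^ (η/2) := by
      rw [MeasureTheory.integral_Ioc_eq_integral_Ioo]
      have hsub0r : Set.Ioo (0:ℝ) r ⊆ Set.Ioo (0:ℝ) 1 :=
        Set.Ioo_subset_Ioo le_rfl hr1.le
      have h1 : (∫ ρ in Set.Ioo s' r, e ρ / (ρ * D ρ))
          ≤ ∫ ρ in Set.Ioo (0:ℝ) r, e ρ / (ρ * D ρ) := by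
        refine setIntegral_mono_set (heint.mono_set hsub0r) ?_
          (HasSubset.Subset.eventuallyLE (Set.Ioo_subset_Ioo hs'0.le le_rfl))
        refine (ae_restrict_iff' measurableSet_Ioo).mpr (Filter.Eventually.of_forall ?_)
        intro t ht
        have h2 := hDpos t (hsub0r ht)
        have h3 := he t (hsub0r ht)
        have h4 : 0 < t := ht.1
        positivity
      exact le_trans h1 (herr r hrIoo)
    -- assemble
    have hmono' : (∫ ρ in Set.Ioc s' r, 1/(2*ρ)) ≤
        ∫ ρ in Set.Ioc s' r,
          (C * D ρ ^ α / ρ + C * (D ρ ^ (α-1) * D' ρ) + e ρ / (ρ * D ρ)) :=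
      setIntegral_mono_on hi1 ((hi2.add hi3).add hi4) measurableSet_Ioc hpt
    have e5 : (∫ ρ in Set.Ioc s' r,
          ((C * D ρ ^ α / ρ + C * (D ρ ^ (α-1) * D' ρ)) + e ρ / (ρ * D ρ)))
        = (∫ ρ in Set.Ioc s' r, (C * D ρ ^ α / ρ + C * (D ρ ^ (α-1) * D' ρ)))
            + ∫ ρ in Set.Ioc s' r, e ρ / (ρ * D ρ) :=
      MeasureTheory.integral_add (hi2.add hi3) hi4
    have e6 : (∫ ρ in Set.Ioc s' r, (C * D ρ ^ α / ρ + C * (D ρ ^ (α-1) * D' ρ)))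
        = (∫ ρ in Set.Ioc s' r, C * D ρ ^ α / ρ)
            + ∫ ρ in Set.Ioc s' r, C * (D ρ ^ (α-1) * D' ρ) :=
      MeasureTheory.integral_add hi2 hi3
    rw [e5, e6] at hmono'
    have hI3 : (∫ ρ in Set.Ioc s' r, C * (D ρ ^ (α-1) * D' ρ))
        = C * ∫ ρ in Set.Ioc s' r, D ρ ^ (α-1) * D' ρ := MeasureTheory.integral_const_mul _ _
    rw [hI1, hI3] at hmono'
    have hgoal : 2 * C * (∫ t in Set.Ioc s' r, D t ^ (α-1) * D' t)
        = 2 * (C * ∫ t in Set.Ioc s' r, D t ^ (α-1) * D' t) := by ring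
    rw [hgoal]
    linarith
  -- the dyadic stopping sets
  set S : ℕ → Set ℝ := fun k => {t | t ∈ Set.Ioc (0:ℝ) r ∧ D t ≤ (1/2:ℝ)^k * M} with hSdef
  have hbdd : ∀ k, BddAbove (S k) := fun k => ⟨r, fun t ht => ht.1.2⟩
  -- final contradiction builder
  have hfinal : ∀ B : ℝ, 0 ≤ B →
      (∀ ε : ℝ, 0 < ε → ∃ s', 0 < s' ∧ s' < ε ∧ s' ≤ r ∧
        (∫ t in Set.Ioc s' r, D t ^ (α-1) * D' t) ≤ B) → False := by
    intro B hB hex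
    obtain ⟨s', hs'0, hs'lt, hs'r, hs'B⟩ := hex (r * Real.exp
      (-(2 * (C * C ^ α * r ^ (2*α) / (2*α)) + 2 * (C * r ^ (η/2)) + 2 * C * B) - 1))
      (by positivity)
    have h1 := hkey s' hs'0 hs'r
    have h2 : 2 * C * (∫ t in Set.Ioc s' r, D t ^ (α-1) * D' t) ≤ 2 * C * B := by
      apply mul_le_mul_of_nonneg_left hs'B
      positivity
    have h3 : Real.log s' < Real.log (r * Real.exp
        (-(2 * (C * C ^ α * r ^ (2*α) / (2*α)) + 2 * (C * r ^ (η/2)) + 2 * C * B) - 1)) :=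
      Real.log_lt_log hs'0 hs'lt
    rw [Real.log_mul (ne_of_gt hr0) (Real.exp_ne_zero _), Real.log_exp] at h3
    linarith
  by_cases hall : ∀ k, (S k).Nonempty
  · -- dyadic case
    set s : ℕ → ℝ := fun k => sSup (S k) with hsdef
    have hsle : ∀ k, s k ≤ r := fun k => csSup_le (hall k) (fun t ht => ht.1.2)
    have hspos : ∀ k, 0 < s k := by
      intro k
      obtain ⟨t, ht⟩ := hall k
      exact lt_of_lt_of_le ht.1.1 (le_csSup (hbdd k) ht)
    have hs1 : ∀ k, s k < 1 := fun k => lt_of_le_of_lt (hsle k) hr1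
    have hsmono : ∀ k, s (k+1) ≤ s k := by
      intro k
      refine csSup_le_csSup (hbdd k) (hall (k+1)) ?_
      intro t ht
      refine ⟨ht.1, le_trans ht.2 ?_⟩
      have : (1/2:ℝ)^(k+1) ≤ (1/2:ℝ)^k := by
        apply pow_le_pow_of_le_one <;> norm_num
      nlinarith
    -- D (s k) ≤ (1/2)^k M by left continuity
    have hDs : ∀ k, D (s k) ≤ (1/2:ℝ)^k * M := by
      intro k
      by_contra hcon
      push_neg at hcon
      have hsk01 : s k ∈ Set.Icc (s k / 2) r := ⟨by linarith [hspos k], hsle k⟩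
      have hcw : ContinuousWithinAt D (Set.Icc (s k / 2) r) (s k) :=
        (hcont (s k / 2) r (by linarith [hspos k]) hr1) (s k) hsk01
      have hev : ∀ᶠ x in nhdsWithin (s k) (Set.Icc (s k / 2) r),
          (1/2:ℝ)^k * M < D x := hcw.eventually_const_lt hcon
      rw [eventually_nhdsWithin_iff, Metric.eventually_nhds_iff] at hev
      obtain ⟨δ, hδ0, hδ⟩ := hev
      have hlt : max (s k / 2) (s k - δ) < s k := by
        apply max_lt
        · linarith [hspos k]
        · linarith
      obtain ⟨t, htS, htgt⟩ := exists_lt_of_lt_csSup (hall k) hlt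
      have htle : t ≤ s k := le_csSup (hbdd k) htS
      have ht1 : t ∈ Set.Icc (s k / 2) r :=
        ⟨le_of_lt (lt_of_le_of_lt (le_max_left _ _) htgt), htS.1.2⟩
      have ht2 : dist t (s k) < δ := by
        rw [Real.dist_eq, abs_lt]
        constructor
        · have := lt_of_le_of_lt (le_max_right _ _) htgt
          linarith
        · linarith
      exact absurd htS.2 (not_le.mpr (hδ ht2 ht1))
    have hs0 : s 0 = r := by
      refine le_antisymm (hsle 0) (le_csSup (hbdd 0) ?_)
      refine ⟨⟨hr0, le_refl r⟩, ?_⟩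
      simp [hMdef]
    have hgt : ∀ k, ∀ t, s (k+1) < t → t ≤ r → (1/2:ℝ)^(k+1) * M < D t := by
      intro k t h1 h2
      by_contra hcon
      push_neg at hcon
      have : t ∈ S (k+1) := ⟨⟨lt_trans (hspos (k+1)) h1, h2⟩, hcon⟩
      exact absurd (le_csSup (hbdd (k+1)) this) (not_le.mpr h1)
    -- geometric data
    set q : ℝ := (1/2:ℝ) ^ α with hqdef
    have hq0 : 0 < q := Real.rpow_pos_of_pos (by norm_num) _
    have hq1 : q < 1 := Real.rpow_lt_one (by norm_num) (by norm_num) hα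
    set mx : ℝ := max ((1/2:ℝ) ^ (α-1)) 1 with hmxdef
    have hmx0 : 0 < mx := lt_of_lt_of_le one_pos (le_max_right _ _)
    have hpowq : ∀ k : ℕ, ((1/2:ℝ)^k) ^ α = q ^ k := by
      intro k
      rw [← Real.rpow_natCast ((1/2:ℝ)) k, ← Real.rpow_natCast q k, hqdef,
        ← Real.rpow_mul (by norm_num : (0:ℝ) ≤ 1/2),
        ← Real.rpow_mul (by norm_num : (0:ℝ) ≤ 1/2), mul_comm]
    -- the inductive claim
    have claim : ∀ N : ℕ, (∫ t in Set.Ioc (s N) r, D t ^ (α-1) * D' t)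
        ≤ ∑ k ∈ Finset.range N, mx * (q ^ k * M ^ α) := by
      intro N
      induction N with
      | zero =>
        rw [hs0, Set.Ioc_self]
        simp
      | succ N ih =>
        have hii1 : IntervalIntegrable (fun t => D t ^ (α-1) * D' t) volume (s (N+1)) (s N) :=
          (intervalIntegrable_iff_integrableOn_Ioc_of_le (hsmono N)).mpr
            (hInt2 _ _ (hspos (N+1)) (hs1 N))
        have hii2 : IntervalIntegrable (fun t => D t ^ (α-1) * D' t) volume (s N) r :=
          (intervalIntegrable_iff_integrableOn_Ioc_of_le (hsle N)).mpr
            (hInt2 _ _ (hspos N) hr1)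
        have hsplit : (∫ t in Set.Ioc (s (N+1)) r, D t ^ (α-1) * D' t)
            = (∫ t in Set.Ioc (s (N+1)) (s N), D t ^ (α-1) * D' t)
              + ∫ t in Set.Ioc (s N) r, D t ^ (α-1) * D' t := by
          rw [← intervalIntegral.integral_of_le (le_trans (hsmono N) (hsle N)),
            ← intervalIntegral.integral_of_le (hsmono N),
            ← intervalIntegral.integral_of_le (hsle N)]
          exact (intervalIntegral.integral_add_adjacent_intervals hii1 hii2).symm
        -- per-step estimate
        have hstepN : (∫ t in Set.Ioc (s (N+1)) (s N), D t ^ (α-1) * D' t)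
            ≤ mx * (q ^ N * M ^ α) := by
          set x : ℝ := (1/2:ℝ)^N * M with hxdef
          have hx0 : 0 < x := by positivity
          have hb1 : ∀ t ∈ Set.Ioc (s (N+1)) (s N), (1/2:ℝ)^(N+1) * M ≤ D t ∧ D t ≤ x := by
            intro t ht
            have ht0 : 0 < t := lt_trans (hspos (N+1)) ht.1
            have ht1 : t < 1 := lt_of_le_of_lt ht.2 (hs1 N)
            constructor
            · exact (hgt N t ht.1 (le_trans ht.2 (hsle N))).le
            · exact le_trans (hmono ⟨ht0, ht1⟩ ⟨hspos N, hs1 N⟩ ht.2) (hDs N)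
          have h1 := hstep (s (N+1)) (s N) ((1/2:ℝ)^(N+1) * M) x
            (hspos (N+1)) (hsmono N) (hs1 N) (by positivity) hb1
          have hDsN1 : 0 < D (s (N+1)) := hDpos _ ⟨hspos (N+1), hs1 (N+1)⟩
          have hinc : D (s N) - D (s (N+1)) ≤ x := by
            have := hDs N
            rw [hxdef]
            linarith
          have hbd0 : 0 ≤ max (((1/2:ℝ)^(N+1) * M) ^ (α-1)) (x ^ (α-1)) :=
            le_trans (Real.rpow_nonneg (by positivity) _) (le_max_left _ _)
          have h2 : (∫ t in Set.Ioc (s (N+1)) (s N), D t ^ (α-1) * D' t)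
              ≤ max (((1/2:ℝ)^(N+1) * M) ^ (α-1)) (x ^ (α-1)) * x :=
            le_trans h1 (mul_le_mul_of_nonneg_left hinc hbd0)
          refine le_trans h2 ?_
          -- algebra: bound max(...) * x
          have hxα : x ^ α = q ^ N * M ^ α := by
            rw [hxdef, Real.mul_rpow (by positivity) hM.le, hpowq]
          have e3 : x ^ (α-1) * x = x ^ α := by
            rw [← Real.rpow_add_one (ne_of_gt hx0) (α-1), sub_add_cancel]
          have e4 : ((1/2:ℝ)^(N+1) * M) ^ (α-1) = (1/2:ℝ) ^ (α-1) * x ^ (α-1) := by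
            have : (1/2:ℝ)^(N+1) * M = (1/2:ℝ) * x := by
              rw [hxdef, pow_succ]
              ring
            rw [this, Real.mul_rpow (by norm_num) hx0.le]
          rw [max_mul_of_nonneg _ _ hx0.le, e4]
          apply max_le
          · calc (1/2:ℝ) ^ (α-1) * x ^ (α-1) * x = (1/2:ℝ) ^ (α-1) * (x ^ (α-1) * x) := by ring
              _ = (1/2:ℝ) ^ (α-1) * x ^ α := by rw [e3]
              _ ≤ mx * x ^ α := by
                  apply mul_le_mul_of_nonneg_right (le_max_left _ _)
                  positivity
              _ = mx * (q ^ N * M ^ α) := by rw [hxα]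
          · calc x ^ (α-1) * x = x ^ α := e3
              _ ≤ mx * x ^ α := by
                  nlinarith [Real.rpow_pos_of_pos hx0 α, le_max_right ((1/2:ℝ)^(α-1)) (1:ℝ)]
              _ = mx * (q ^ N * M ^ α) := by rw [hxα]
        rw [hsplit, Finset.sum_range_succ]
        linarith
    -- geometric sum bound
    set B : ℝ := mx * M ^ α * (1 - q)⁻¹ with hBdef
    have hBnn : 0 ≤ B := by
      have : 0 < 1 - q := by linarith
      positivity
    have hsum : ∀ N : ℕ, (∑ k ∈ Finset.range N, mx * (q ^ k * M ^ α)) ≤ B := by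
      intro N
      have h1 : (∑ k ∈ Finset.range N, mx * (q ^ k * M ^ α))
          = mx * M ^ α * ∑ k ∈ Finset.range N, q ^ k := by
        rw [Finset.mul_sum]
        apply Finset.sum_congr rfl
        intro k _
        ring
      rw [h1, hBdef]
      have h2 : (∑ k ∈ Finset.range N, q ^ k) ≤ (1 - q)⁻¹ := by
        have h1q : (0:ℝ) < 1 - q := by linarith
        rw [geom_sum_eq (ne_of_lt hq1)]
        rw [show (q ^ N - 1) / (q - 1) = (1 - q ^ N) / (1 - q) by
          rw [show (1:ℝ) - q ^ N = -(q ^ N - 1) by ring, show (1:ℝ) - q = -(q - 1) by ring,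
            neg_div_neg_eq]]
        rw [inv_eq_one_div]
        have hqN : (1:ℝ) - q ^ N ≤ 1 := by nlinarith [pow_nonneg hq0.le N]
        exact div_le_div_of_nonneg_right hqN h1q.le
      apply mul_le_mul_of_nonneg_left h2
      positivity
    -- apply the final contradiction
    refine hfinal B hBnn ?_
    intro ε hε
    -- find N with s N < ε
    have hexN : ∃ N, s N < ε := by
      by_contra hcon
      push_neg at hcon
      have hε1 : ε < 1 := lt_of_le_of_lt (le_trans (hcon 0) (hsle 0)) hr1
      have hDε : 0 < D ε := hDpos ε ⟨hε, hε1⟩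
      have hDεle : ∀ N, D ε ≤ (1/2:ℝ)^N * M := by
        intro N
        exact le_trans (hmono ⟨hε, hε1⟩ ⟨hspos N, hs1 N⟩ (hcon N)) (hDs N)
      obtain ⟨N, hN⟩ := exists_pow_lt_of_lt_one (div_pos hDε hM) (by norm_num : (1/2:ℝ) < 1)
      have : (1/2:ℝ)^N * M < D ε := by
        rw [lt_div_iff₀ hM] at hN
        exact hN
      exact absurd (hDεle N) (not_le.mpr this)
    obtain ⟨N, hN⟩ := hexN
    exact ⟨s N, hspos N, hN, hsle N, le_trans (claim N) (hsum N)⟩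
  · -- non-dyadic case: D bounded below on (0, r]
    push_neg at hall
    obtain ⟨k₀, hk₀⟩ := hall
    set lo : ℝ := (1/2:ℝ)^k₀ * M with hlodef
    have hlo0 : 0 < lo := by positivity
    have hlogt : ∀ t ∈ Set.Ioc (0:ℝ) r, lo < D t := by
      intro t ht
      by_contra hcon
      push_neg at hcon
      have : t ∈ S k₀ := ⟨ht, hcon⟩
      rw [hk₀] at this
      exact this
    set B : ℝ := max (lo ^ (α-1)) (M ^ (α-1)) * M with hBdef
    have hBnn : 0 ≤ B := by
      apply mul_nonneg _ hM.le
      exact le_trans (Real.rpow_nonneg hlo0.le _) (le_max_left _ _)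
    refine hfinal B hBnn ?_
    intro ε hε
    set s' : ℝ := min (r/2) (ε/2) with hs'def
    have hs'0 : 0 < s' := by
      apply lt_min <;> linarith
    have hs'r : s' ≤ r := le_trans (min_le_left _ _) (by linarith)
    refine ⟨s', hs'0, lt_of_le_of_lt (min_le_right _ _) (by linarith), hs'r, ?_⟩
    have hb1 : ∀ t ∈ Set.Ioc s' r, lo ≤ D t ∧ D t ≤ M := by
      intro t ht
      have ht0 : 0 < t := lt_trans hs'0 ht.1
      have ht1 : t < 1 := lt_of_le_of_lt ht.2 hr1
      exact ⟨(hlogt t ⟨ht0, ht.2⟩).le, hmono ⟨ht0, ht1⟩ hrIoo ht.2⟩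
    have h1 := hstep s' r lo M hs'0 hs'r hr1 hlo0 hb1
    refine le_trans h1 ?_
    have hDs' : 0 < D s' := hDpos s' ⟨hs'0, lt_of_le_of_lt hs'r hr1⟩
    have hbd0 : 0 ≤ max (lo ^ (α-1)) (M ^ (α-1)) :=
      le_trans (Real.rpow_nonneg hlo0.le _) (le_max_left _ _)
    rw [hBdef]
    apply mul_le_mul_of_nonneg_left _ hbd0
    rw [hMdef]
    linarith
end

section
/- Let I : (0, r₀) → ℝ be continuous with I(r) → I₀ as r → 0 and |I(r) − I₀| ≤ C r^λ for some λ, C > 0 and I₀ > 0. Let H : (0, r₀) → (0, ∞) be absolutely continuous and suppose |(log(H(r)/r^{2I₀+1}))'| ≤ (2/r)|I(r) − I₀| + e(r)/H(r) a.e., where ∫_0^{r₀} e(r)/H(r) dr < ∞ and ∫_0^r e(t)/H(t) dt ≤ C r^λ. Then the limit H₀ := lim_{r→0} H(r)/r^{2I₀+1} exists, is finite and positive, and |H(r)/r^{2I₀+1} − H₀| ≤ C' r^λ for all small r and some constant C'. -/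
open MeasureTheory

/-- Decay of the height: if the frequency `I(r) → I₀ > 0` with rate `r^lam` and
`log(H(r)/r^{2I₀+1})` is absolutely continuous with
`|(log(H(r)/r^{2I₀+1}))'| ≤ (2/r)|I(r)-I₀| + e(r)/H(r)` a.e., where
`∫_0^r e/H ≤ C r^lam`, then `H₀ := lim_{r→0} H(r)/r^{2I₀+1}` exists, is positive,
and `|H(r)/r^{2I₀+1} - H₀| ≤ C' r^lam` for small `r`. -/
theorem stmt_11 (r₀ I₀ lam C : ℝ) (hr₀ : 0 < r₀) (hI₀ : 0 < I₀) (hlam : 0 < lam)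
    (hC : 0 < C) (I H e L' : ℝ → ℝ)
    (hIcont : ContinuousOn I (Set.Ioo 0 r₀))
    (hIlim : Filter.Tendsto I (nhdsWithin 0 (Set.Ioi 0)) (nhds I₀))
    (hIdecay : ∀ r ∈ Set.Ioo 0 r₀, |I r - I₀| ≤ C * r ^ lam)
    (hHpos : ∀ r ∈ Set.Ioo 0 r₀, 0 < H r)
    (henn : ∀ r ∈ Set.Ioo 0 r₀, 0 ≤ e r)
    (hL'int : IntegrableOn L' (Set.Ioo 0 r₀))
    (hderiv : ∀ᵐ r ∂(volume.restrict (Set.Ioo 0 r₀)),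
      HasDerivAt (fun s => Real.log (H s / s ^ (2 * I₀ + 1))) (L' r) r)
    (hFTC : ∀ s r : ℝ, 0 < s → s ≤ r → r < r₀ →
      Real.log (H r / r ^ (2 * I₀ + 1)) - Real.log (H s / s ^ (2 * I₀ + 1)) =
        ∫ t in Set.Ioo s r, L' t)
    (hL'bound : ∀ᵐ r ∂(volume.restrict (Set.Ioo 0 r₀)),
      |L' r| ≤ 2 / r * |I r - I₀| + e r / H r)
    (heHint : IntegrableOn (fun r => e r / H r) (Set.Ioo 0 r₀))
    (heH : ∀ r ∈ Set.Ioo 0 r₀, (∫ t in Set.Ioo (0 : ℝ) r, e t / H t) ≤ C * r ^ lam) :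
    ∃ H₀ : ℝ, 0 < H₀ ∧
      Filter.Tendsto (fun r => H r / r ^ (2 * I₀ + 1)) (nhdsWithin 0 (Set.Ioi 0)) (nhds H₀) ∧
      ∃ C' : ℝ, 0 < C' ∧ ∃ r₁ > (0 : ℝ), ∀ r ∈ Set.Ioo (0 : ℝ) r₁,
        |H r / r ^ (2 * I₀ + 1) - H₀| ≤ C' * r ^ lam := by
  set l := nhdsWithin (0 : ℝ) (Set.Ioi 0) with hldef
  set G : ℝ → ℝ := fun s => Real.log (H s / s ^ (2 * I₀ + 1)) with hGdef
  set K : ℝ := 2 * C / lam + C with hKdef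
  have hKpos : 0 < K := by positivity
  -- a.e. bound on L'
  have hb : ∀ᵐ r ∂(volume.restrict (Set.Ioo 0 r₀)),
      |L' r| ≤ 2 * C * r ^ (lam - 1) + e r / H r := by
    filter_upwards [hL'bound, ae_restrict_mem measurableSet_Ioo] with r h1 h2
    refine h1.trans (add_le_add ?_ le_rfl)
    have hr : (0 : ℝ) < r := h2.1
    have h3 : 2 / r * |I r - I₀| ≤ 2 / r * (C * r ^ lam) :=
      mul_le_mul_of_nonneg_left (hIdecay r h2) (by positivity)
    refine h3.trans (le_of_eq ?_)
    rw [Real.rpow_sub hr, Real.rpow_one]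
    field_simp
  -- key estimate
  have key : ∀ s r : ℝ, 0 < s → s ≤ r → r < r₀ → |G r - G s| ≤ K * r ^ lam := by
    intro s r hs hsr hr
    have hr0 : (0 : ℝ) < r := lt_of_lt_of_le hs hsr
    have hsub : Set.Ioo s r ⊆ Set.Ioo 0 r₀ := fun t ht => ⟨hs.trans ht.1, ht.2.trans hr⟩
    have hint1 : IntegrableOn (fun t => 2 * C * t ^ (lam - 1)) (Set.Ioo s r) := by
      have h1 : IntervalIntegrable (fun t : ℝ => t ^ (lam - 1)) volume s r :=
        intervalIntegral.intervalIntegrable_rpow' (by linarith)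
      exact ((h1.1.mono_set Set.Ioo_subset_Ioc_self).const_mul (2 * C))
    have hint2 : IntegrableOn (fun t => e t / H t) (Set.Ioo s r) := heHint.mono_set hsub
    have hintL : IntegrableOn (fun t => |L' t|) (Set.Ioo s r) := (hL'int.mono_set hsub).abs
    have e1 : G r - G s = ∫ t in Set.Ioo s r, L' t := hFTC s r hs hsr hr
    rw [e1]
    have e2 : |∫ t in Set.Ioo s r, L' t| ≤ ∫ t in Set.Ioo s r, |L' t| := by
      simpa [Real.norm_eq_abs] using
        norm_integral_le_integral_norm (μ := volume.restrict (Set.Ioo s r)) L'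
    have hb' : ∀ᵐ t ∂(volume.restrict (Set.Ioo s r)),
        |L' t| ≤ 2 * C * t ^ (lam - 1) + e t / H t :=
      Filter.Eventually.filter_mono (ae_mono (Measure.restrict_mono hsub le_rfl)) hb
    have e3 : (∫ t in Set.Ioo s r, |L' t|)
        ≤ ∫ t in Set.Ioo s r, (2 * C * t ^ (lam - 1) + e t / H t) :=
      integral_mono_ae hintL (hint1.add hint2) hb'
    have e4 : (∫ t in Set.Ioo s r, (2 * C * t ^ (lam - 1) + e t / H t))
        = (∫ t in Set.Ioo s r, 2 * C * t ^ (lam - 1)) + ∫ t in Set.Ioo s r, e t / H t :=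
      integral_add hint1 hint2
    have e5 : (∫ t in Set.Ioo s r, 2 * C * t ^ (lam - 1)) ≤ 2 * C / lam * r ^ lam := by
      have h1 : (∫ t in Set.Ioo s r, 2 * C * t ^ (lam - 1))
          = ∫ t in s..r, 2 * C * t ^ (lam - 1) := by
        rw [intervalIntegral.integral_of_le hsr, integral_Ioc_eq_integral_Ioo]
      rw [h1, intervalIntegral.integral_const_mul,
        integral_rpow (Or.inl (by linarith : (-1 : ℝ) < lam - 1))]
      have hsl : 0 ≤ s ^ lam := Real.rpow_nonneg hs.le lam
      have h2 : lam - 1 + 1 = lam := by ring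
      rw [h2]
      have h3 : 2 * C * ((r ^ lam - s ^ lam) / lam) ≤ 2 * C * (r ^ lam / lam) := by
        gcongr
        linarith
      linarith [h3, (by ring : 2 * C * (r ^ lam / lam) = 2 * C / lam * r ^ lam)]
    have e6 : (∫ t in Set.Ioo s r, e t / H t) ≤ C * r ^ lam := by
      have hsub2 : Set.Ioo s r ⊆ Set.Ioo 0 r := fun t ht => ⟨hs.trans ht.1, ht.2⟩
      have hsub3 : Set.Ioo (0 : ℝ) r ⊆ Set.Ioo 0 r₀ := fun t ht => ⟨ht.1, ht.2.trans hr⟩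
      have hnn : 0 ≤ᵐ[volume.restrict (Set.Ioo (0 : ℝ) r)] fun t => e t / H t := by
        filter_upwards [ae_restrict_mem measurableSet_Ioo] with t ht
        exact div_nonneg (henn t (hsub3 ht)) (hHpos t (hsub3 ht)).le
      have := setIntegral_mono_set (heHint.mono_set hsub3) hnn
        (HasSubset.Subset.eventuallyLE hsub2)
      exact this.trans (heH r ⟨hr0, hr⟩)
    calc |∫ t in Set.Ioo s r, L' t| ≤ ∫ t in Set.Ioo s r, |L' t| := e2
      _ ≤ (∫ t in Set.Ioo s r, 2 * C * t ^ (lam - 1)) + ∫ t in Set.Ioo s r, e t / H t := by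
          rw [← e4]; exact e3
      _ ≤ 2 * C / lam * r ^ lam + C * r ^ lam := add_le_add e5 e6
      _ = K * r ^ lam := by rw [hKdef]; ring
  -- K * r^lam → 0 along l
  have hrpow : Filter.Tendsto (fun r : ℝ => K * r ^ lam) l (nhds 0) := by
    have h1 : Filter.Tendsto (fun r : ℝ => r ^ lam) (nhds 0) (nhds 0) := by
      have h := (Real.continuousAt_rpow_const 0 lam (Or.inr hlam.le)).tendsto
      simpa [Real.zero_rpow hlam.ne'] using h
    have h2 := (h1.const_mul K).mono_left (nhdsWithin_le_nhds : l ≤ nhds 0)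
    simpa using h2
  have hlt : ∀ᶠ r in l, r < r₀ :=
    ((gt_mem_nhds hr₀).filter_mono (nhdsWithin_le_nhds : l ≤ nhds 0))
  -- Cauchy
  have hc : Cauchy (Filter.map G l) := by
    rw [Metric.cauchy_iff]
    refine ⟨Filter.map_neBot, fun ε hε => ?_⟩
    have hev : ∀ᶠ r in l, K * r ^ lam < ε ∧ r < r₀ :=
      (hrpow.eventually (gt_mem_nhds hε)).and hlt
    obtain ⟨δ, hδ, hsubδ⟩ := mem_nhdsGT_iff_exists_Ioo_subset.mp hev
    refine ⟨G '' Set.Ioo 0 δ, ?_, ?_⟩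
    · rw [Filter.mem_map]
      exact Filter.mem_of_superset (Ioo_mem_nhdsGT_of_mem ⟨le_refl 0, hδ⟩)
        (Set.subset_preimage_image G _)
    · rintro x ⟨a, ha, rfl⟩ y ⟨b, hb2, rfl⟩
      have hd : ∀ u v : ℝ, u ∈ Set.Ioo (0:ℝ) δ → v ∈ Set.Ioo (0:ℝ) δ → u ≤ v →
          dist (G u) (G v) < ε := by
        intro u v hu hv huv
        have hvE := hsubδ hv
        rw [Real.dist_eq, abs_sub_comm]
        exact lt_of_le_of_lt (key u v hu.1 huv hvE.2) hvE.1
      rcases le_total a b with hab | hab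
      · exact hd a b ha hb2 hab
      · rw [dist_comm]; exact hd b a hb2 ha hab
  obtain ⟨G₀, hG₀⟩ := CompleteSpace.complete hc
  have hGt : Filter.Tendsto G l (nhds G₀) := hG₀
  -- bound on G
  have hGbound : ∀ r ∈ Set.Ioo (0 : ℝ) r₀, |G r - G₀| ≤ K * r ^ lam := by
    intro r hr
    have h1 : Filter.Tendsto (fun s => |G r - G s|) l (nhds |G r - G₀|) :=
      (Filter.Tendsto.sub tendsto_const_nhds hGt).abs
    refine le_of_tendsto h1 ?_
    filter_upwards [Ioo_mem_nhdsGT_of_mem ⟨le_refl (0:ℝ), hr.1⟩] with s hs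
    exact key s r hs.1 hs.2.le hr.2
  -- pass to H via exp
  have hPeq : ∀ r ∈ Set.Ioo (0 : ℝ) r₀, H r / r ^ (2 * I₀ + 1) = Real.exp (G r) := by
    intro r hr
    have h1 : 0 < H r / r ^ (2 * I₀ + 1) :=
      div_pos (hHpos r hr) (Real.rpow_pos_of_pos hr.1 _)
    rw [hGdef, Real.exp_log h1]
  refine ⟨Real.exp G₀, Real.exp_pos _, ?_, ?_⟩
  · have h2 : Filter.Tendsto (fun r => Real.exp (G r)) l (nhds (Real.exp G₀)) :=
      (Real.continuous_exp.continuousAt.tendsto).comp hGt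
    refine h2.congr' ?_
    filter_upwards [Ioo_mem_nhdsGT_of_mem ⟨le_refl (0:ℝ), hr₀⟩] with r hr
    exact (hPeq r hr).symm
  · refine ⟨2 * Real.exp G₀ * K, by positivity, ?_⟩
    have hev : ∀ᶠ r in l, K * r ^ lam ≤ 1 ∧ r < r₀ :=
      (hrpow.eventually (ge_mem_nhds one_pos)).and hlt
    obtain ⟨r₁, hr₁, hsub₁⟩ := mem_nhdsGT_iff_exists_Ioo_subset.mp hev
    refine ⟨r₁, hr₁, fun r hr => ?_⟩
    obtain ⟨hK1, hrr₀⟩ := hsub₁ hr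
    have hr' : r ∈ Set.Ioo (0 : ℝ) r₀ := ⟨hr.1, hrr₀⟩
    have hGb := hGbound r hr'
    rw [hPeq r hr']
    have h3 : Real.exp (G r) - Real.exp G₀ = Real.exp G₀ * (Real.exp (G r - G₀) - 1) := by
      rw [Real.exp_sub]
      field_simp
    rw [h3, abs_mul, abs_of_pos (Real.exp_pos G₀)]
    have h4 : |Real.exp (G r - G₀) - 1| ≤ 2 * |G r - G₀| :=
      Real.abs_exp_sub_one_le (hGb.trans hK1)
    calc Real.exp G₀ * |Real.exp (G r - G₀) - 1|
        ≤ Real.exp G₀ * (2 * |G r - G₀|) :=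
          mul_le_mul_of_nonneg_left h4 (Real.exp_pos G₀).le
      _ ≤ Real.exp G₀ * (2 * (K * r ^ lam)) := by
          have := mul_le_mul_of_nonneg_left hGb (by norm_num : (0:ℝ) ≤ 2)
          exact mul_le_mul_of_nonneg_left this (Real.exp_pos G₀).le
      _ = 2 * Real.exp G₀ * K * r ^ lam := by ring
end
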